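/- arXiv:1112.0846 — 9 statements merged into one kernel-verified Lean document; each statement's English description precedes it below -/
import Mathlib

section
/- For every finite simple graph G on n ≥ 3 vertices, d_oc(G, n−2) equals the number of edges uv of G such that both endpoints u and v have degree at least 2 in G. -/
/-- `S` is a dominating set of `G`: every vertex not in `S` is adjacent to a vertex of `S`. -/
def IsDomSet {V : Type*} (G : SimpleGraph V) (S : Finset V) : Prop :=
  ∀ v ∉ S, ∃ u ∈ S, G.Adj u v

/-- `S` is an outer-connected dominating set of `G`. -/
def IsOcdSet {V : Type*} [Fintype V] (G : SimpleGraph V) (S : Finset V) : Prop :=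
  IsDomSet G S ∧ (S = Finset.univ ∨ (G.induce ((↑S : Set V)ᶜ)).Connected)

/-- `docNum G i` is the number of ocd-sets of `G` of cardinality `i`. -/
noncomputable def docNum {V : Type*} [Fintype V] (G : SimpleGraph V) (i : ℕ) : ℕ :=
  Nat.card {S : Finset V // IsOcdSet G S ∧ S.card = i}

lemma two_conn {V : Type*} (G : SimpleGraph V) {u v : V} (huv : u ≠ v) :
    (G.induce ({u,v} : Set V)).Connected ↔ G.Adj u v := by
  have hu : u ∈ ({u,v} : Set V) := by simp
  have hv : v ∈ ({u,v} : Set V) := by simp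
  constructor
  · intro hc
    obtain ⟨w⟩ := hc.preconnected ⟨u, hu⟩ ⟨v, hv⟩
    have hnil : ¬ w.Nil := by
      intro h
      exact huv (congrArg Subtype.val h.eq)
    have hadj : (G.induce ({u,v} : Set V)).Adj ⟨u, hu⟩ (w.getVert 1) := w.adj_snd hnil
    rcases (w.getVert 1).2 with h | h
    · exfalso
      have he : w.getVert 1 = ⟨u, hu⟩ := Subtype.ext h
      rw [he] at hadj
      exact (G.induce ({u,v} : Set V)).irrefl hadj
    · have : w.getVert 1 = ⟨v, hv⟩ := Subtype.ext h
      rw [this] at hadj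
      exact hadj
  · intro h
    have key : ∀ x : ({u,v} : Set V), (G.induce ({u,v} : Set V)).Reachable ⟨u,hu⟩ x := by
      rintro ⟨x, hx | hx⟩
      · subst hx; rfl
      · subst hx
        exact SimpleGraph.Adj.reachable h
    exact SimpleGraph.connected_iff_exists_forall_reachable _ |>.2 ⟨⟨u,hu⟩, key⟩

-- degree ≥ 2 given adjacency gives another neighbor
lemma exists_other {V : Type*} [Fintype V] (G : SimpleGraph V) {u v : V} (h : G.Adj u v)
    (hd : 2 ≤ (G.neighborSet u).ncard) : ∃ w, G.Adj u w ∧ w ≠ v := by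
  by_contra hc
  push_neg at hc
  have hsub : G.neighborSet u ⊆ {v} := by
    intro w hw
    exact hc w hw
  have := Set.ncard_le_ncard hsub (Set.finite_singleton v)
  simp [Set.ncard_singleton] at this
  have := (Set.ncard_le_one_iff_subsingleton (s := G.neighborSet u)).2 this
  omega

/-- for `n ≥ 3`, `d_oc(G, n-2)` equals the number of edges of `G`
both of whose endpoints have degree at least `2`. -/
theorem stmt_3 {V : Type*} [Fintype V] (G : SimpleGraph V) (hn : 3 ≤ Fintype.card V) :
    docNum G (Fintype.card V - 2) =
      Nat.card {e : Sym2 V // e ∈ G.edgeSet ∧ ∀ v ∈ e, 2 ≤ (G.neighborSet v).ncard} := by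
  classical
  set n := Fintype.card V with hn'
  -- the map from edges to sets
  let f : Sym2 V → Finset V := fun e => Finset.univ.filter (· ∉ e)
  have mem_f : ∀ (e : Sym2 V) (x : V), x ∈ f e ↔ x ∉ e := by
    intro e x; simp [f]
  have compl_f : ∀ u v : V, ((↑(f s(u,v)) : Set V)ᶜ) = {u, v} := by
    intro u v
    ext x
    simp [mem_f, Sym2.mem_iff, Set.mem_insert_iff]
    tauto
  have card_f : ∀ u v : V, u ≠ v → (f s(u,v)).card = n - 2 := by
    intro u v huv
    have : f s(u,v) = Finset.univ \ {u, v} := by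
      ext x
      simp [mem_f, Sym2.mem_iff]
    rw [this, Finset.card_sdiff_of_subset (by simp)]
    rw [Finset.card_pair huv]
    simp [hn']
  have hΦ : ∀ e : {e : Sym2 V // e ∈ G.edgeSet ∧ ∀ v ∈ e, 2 ≤ (G.neighborSet v).ncard},
      IsOcdSet G (f e.1) ∧ (f e.1).card = n - 2 := by
    rintro ⟨e, he, hdeg⟩
    induction e with
    | _ u v =>
    rw [SimpleGraph.mem_edgeSet] at he
    have huv : u ≠ v := he.ne
    refine ⟨⟨?_, ?_⟩, card_f u v huv⟩
    · intro x hx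
      rw [mem_f] at hx
      push_neg at hx
      rw [Sym2.mem_iff] at hx
      rcases hx with rfl | rfl
      · obtain ⟨w, hw, hwv⟩ := exists_other G he (hdeg x (by simp))
        exact ⟨w, by rw [mem_f]; simp [Sym2.mem_iff]; exact ⟨fun h => G.irrefl (h ▸ hw), fun h => hwv h⟩, hw.symm⟩
      · obtain ⟨w, hw, hwu⟩ := exists_other G he.symm (hdeg x (by simp))
        exact ⟨w, by rw [mem_f]; simp [Sym2.mem_iff]; exact ⟨fun h => hwu h, fun h => G.irrefl (h ▸ hw)⟩, hw.symm⟩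
    · right
      rw [compl_f u v]
      exact (two_conn G huv).2 he
  let Φ : {e : Sym2 V // e ∈ G.edgeSet ∧ ∀ v ∈ e, 2 ≤ (G.neighborSet v).ncard} →
      {S : Finset V // IsOcdSet G S ∧ S.card = n - 2} := fun e => ⟨f e.1, hΦ e⟩
  have hinj : Function.Injective Φ := by
    rintro ⟨e₁, h₁⟩ ⟨e₂, h₂⟩ h
    have hf : f e₁ = f e₂ := congrArg Subtype.val h
    apply Subtype.ext
    apply Sym2.ext
    intro x
    have h2 : x ∉ e₁ ↔ x ∉ e₂ := by
      constructor <;> intro hx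
      · rw [← mem_f] at hx ⊢; rw [← hf]; exact hx
      · rw [← mem_f] at hx ⊢; rw [hf]; exact hx
    exact not_iff_not.1 h2
  have hsurj : Function.Surjective Φ := by
    rintro ⟨S, ⟨hdom, hconn⟩, hcard⟩
    have hSne : S ≠ Finset.univ := by
      intro h
      rw [h, Finset.card_univ] at hcard
      omega
    have hcompl_card : (Finset.univ \ S).card = 2 := by
      rw [Finset.card_sdiff_of_subset (Finset.subset_univ S), Finset.card_univ, hcard]
      omega
    obtain ⟨u, v, huv, hc⟩ := Finset.card_eq_two.1 hcompl_card
    have hmemS : ∀ x : V, x ∈ S ↔ (x ≠ u ∧ x ≠ v) := by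
      intro x
      have : x ∈ Finset.univ \ S ↔ x ∈ ({u,v} : Finset V) := by rw [hc]
      simp at this
      constructor
      · intro hx
        constructor <;> intro h <;> subst h <;> tauto
      · intro ⟨h1, h2⟩
        by_contra hx
        rcases this.1 hx with h | h <;> [exact h1 h; exact h2 h]
    have hset : ((↑S : Set V)ᶜ) = {u, v} := by
      ext x
      simp [hmemS, Set.mem_insert_iff]
      tauto
    have hadj : G.Adj u v := by
      rcases hconn with h | h
      · exact absurd h hSne
      · rw [hset] at h
        exact (two_conn G huv).1 h
    have hdeg : ∀ x ∈ s(u,v), 2 ≤ (G.neighborSet x).ncard := by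
      intro x hx
      rw [Sym2.mem_iff] at hx
      have key : ∀ a b : V, G.Adj a b → a ∉ S → b ∉ S → 2 ≤ (G.neighborSet a).ncard := by
        intro a b hab ha hb
        obtain ⟨w, hwS, hwa⟩ := hdom a ha
        have hwb : w ≠ b := fun h => hb (h ▸ hwS)
        have hsub : ({w, b} : Set V) ⊆ G.neighborSet a := by
          rintro z (rfl | rfl)
          · exact hwa.symm
          · exact hab
        calc 2 = ({w, b} : Set V).ncard := (Set.ncard_pair hwb).symm
          _ ≤ _ := Set.ncard_le_ncard hsub (Set.toFinite _)
      have huS : u ∉ S := by rw [hmemS]; tauto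
      have hvS : v ∉ S := by rw [hmemS]; tauto
      rcases hx with rfl | rfl
      · exact key x v hadj huS hvS
      · exact key x u hadj.symm hvS huS
    refine ⟨⟨s(u,v), G.mem_edgeSet.2 hadj, hdeg⟩, ?_⟩
    apply Subtype.ext
    show f s(u,v) = S
    ext x
    rw [mem_f, hmemS, Sym2.mem_iff]
    tauto
  rw [docNum]
  exact (Nat.card_congr (Equiv.ofBijective Φ ⟨hinj, hsurj⟩)).symm
end

section
/- For the star K_{1,n} with n ≥ 1 (one center adjacent to n leaves, and no other edges), the ocd-sets are exactly the whole vertex set, the sets obtained from the whole vertex set by removing one leaf, and the set of all n leaves; consequently d_oc(K_{1,n}, n) = n+1, d_oc(K_{1,n}, n+1) = 1, and d_oc(K_{1,n}, i) = 0 for all other i. -/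
/-- The star `K_{1,n}`: vertex `0` is the center, adjacent to the `n` leaves. -/
def starGraph (n : ℕ) : SimpleGraph (Fin (n + 1)) :=
  SimpleGraph.fromRel (fun u _ => u = 0)

lemma star_adj (n : ℕ) (u v : Fin (n+1)) :
    (starGraph n).Adj u v ↔ u ≠ v ∧ (u = 0 ∨ v = 0) := by
  simp [starGraph]

lemma conn_singleton (n : ℕ) (v : Fin (n+1)) :
    ((starGraph n).induce ({v} : Set (Fin (n+1)))).Connected := by
  rw [SimpleGraph.connected_iff]
  refine ⟨fun a b => ?_, ⟨⟨v, rfl⟩⟩⟩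
  have : a = b := Subtype.ext (by rw [Set.eq_of_mem_singleton a.2, Set.eq_of_mem_singleton b.2])
  rw [this]

lemma no_reach (n : ℕ) (T : Set (Fin (n+1))) (h0 : (0 : Fin (n+1)) ∉ T)
    (a b : T) (h : ((starGraph n).induce T).Reachable a b) : a = b := by
  have hbot : (starGraph n).induce T = ⊥ := by
    ext x y
    simp only [SimpleGraph.comap_adj, SimpleGraph.bot_adj, iff_false, star_adj,
      Function.Embedding.coe_subtype]
    rintro ⟨hne, h0' | h0'⟩
    · exact h0 (h0' ▸ x.2)
    · exact h0 (h0' ▸ y.2)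
  rw [hbot] at h
  exact SimpleGraph.reachable_bot.mp h

lemma ocd_iff (n : ℕ) (hn : 1 ≤ n) (S : Finset (Fin (n + 1))) :
    IsOcdSet (starGraph n) S ↔
      (S = Finset.univ ∨ (∃ v : Fin (n + 1), v ≠ 0 ∧ S = Finset.univ \ {v}) ∨
        S = Finset.univ \ {0}) := by
  have hone : (1 : Fin (n+1)) ≠ 0 := by
    intro h
    have := congrArg Fin.val h
    simp [Fin.val_one, Nat.mod_eq_of_lt (by omega : 1 < n + 1)] at this
  constructor
  · rintro ⟨hdom, hconn⟩
    by_cases hSU : S = Finset.univ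
    · exact Or.inl hSU
    right
    by_cases h0 : (0 : Fin (n+1)) ∈ S
    · have hconn' := hconn.resolve_left hSU
      obtain ⟨w⟩ := hconn'.nonempty
      have h0T : (0 : Fin (n+1)) ∉ ((↑S : Set (Fin (n+1)))ᶜ) := by
        simp [h0]
      have key : ∀ x : Fin (n+1), x ∉ S → x = ↑w := by
        intro x hx
        have hxT : x ∈ ((↑S : Set (Fin (n+1)))ᶜ) := by simpa using hx
        exact congrArg Subtype.val (no_reach n _ h0T ⟨x, hxT⟩ w (hconn'.preconnected _ _))
      have hwS : (↑w : Fin (n+1)) ∉ S := fun h => w.2 (Finset.mem_coe.mpr h)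
      left
      refine ⟨↑w, fun h => hwS (h ▸ h0), ?_⟩
      ext x
      simp only [Finset.mem_sdiff, Finset.mem_univ, Finset.mem_singleton, true_and]
      constructor
      · intro hx h; exact hwS (h ▸ hx)
      · intro hx; by_contra hxS; exact hx (key x hxS)
    · right
      ext x
      simp only [Finset.mem_sdiff, Finset.mem_univ, Finset.mem_singleton, true_and]
      constructor
      · intro hx h; exact h0 (h ▸ hx)
      · intro hx
        by_contra hxS
        obtain ⟨u, huS, hu⟩ := hdom x hxS
        rw [star_adj] at hu
        rcases hu.2 with h | h
        · exact h0 (h ▸ huS)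
        · exact hx h
  · rintro (rfl | ⟨v, hv, rfl⟩ | rfl)
    · exact ⟨fun v hv => absurd (Finset.mem_univ v) hv, Or.inl rfl⟩
    · constructor
      · intro w hw
        have hwv : w = v := by simpa using hw
        refine ⟨0, by simp [Ne.symm hv], ?_⟩
        rw [star_adj]
        exact ⟨by rw [hwv]; exact Ne.symm hv, Or.inl rfl⟩
      · right
        have hc : ((↑(Finset.univ \ {v} : Finset (Fin (n+1))) : Set (Fin (n+1)))ᶜ) = {v} := by
          ext x; simp
        rw [hc]
        exact conn_singleton n v
    · constructor
      · intro w hw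
        have hw0 : w = 0 := by simpa using hw
        refine ⟨1, by simp [hone], ?_⟩
        rw [star_adj]
        exact ⟨hw0 ▸ hone, Or.inr hw0⟩
      · right
        have hc : ((↑(Finset.univ \ {0} : Finset (Fin (n+1))) : Set (Fin (n+1)))ᶜ)
            = {(0 : Fin (n+1))} := by ext x; simp
        rw [hc]
        exact conn_singleton n 0


theorem stmt_5 (n : ℕ) (hn : 1 ≤ n) :
    (∀ S : Finset (Fin (n + 1)), IsOcdSet (starGraph n) S ↔
      (S = Finset.univ ∨ (∃ v : Fin (n + 1), v ≠ 0 ∧ S = Finset.univ \ {v}) ∨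
        S = Finset.univ \ {0})) ∧
    docNum (starGraph n) n = n + 1 ∧
    docNum (starGraph n) (n + 1) = 1 ∧
    (∀ i : ℕ, i ≠ n → i ≠ n + 1 → docNum (starGraph n) i = 0) := by
  have hiff := ocd_iff n hn
  have hcardU : (Finset.univ : Finset (Fin (n+1))).card = n + 1 := by simp
  have hcard : ∀ v : Fin (n+1), (Finset.univ \ {v} : Finset (Fin (n+1))).card = n := by
    intro v
    rw [Finset.card_sdiff_of_subset (by simp)]
    simp
  have hocd : ∀ v : Fin (n+1), IsOcdSet (starGraph n) (Finset.univ \ {v}) := by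
    intro v
    rcases eq_or_ne v 0 with rfl | hv
    · exact (hiff _).mpr (Or.inr (Or.inr rfl))
    · exact (hiff _).mpr (Or.inr (Or.inl ⟨v, hv, rfl⟩))
  refine ⟨hiff, ?_, ?_, ?_⟩
  · rw [docNum]
    have hb : Function.Bijective
        (fun v : Fin (n+1) =>
          (⟨Finset.univ \ {v}, hocd v, hcard v⟩ :
            {S : Finset (Fin (n+1)) // IsOcdSet (starGraph n) S ∧ S.card = n})) := by
      constructor
      · intro a b h
        have h' : (Finset.univ \ {a} : Finset (Fin (n+1))) = Finset.univ \ {b} :=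
          congrArg Subtype.val h
        by_contra hab
        have : a ∈ (Finset.univ \ {b} : Finset (Fin (n+1))) := by simp [hab]
        rw [← h'] at this
        simp at this
      · rintro ⟨S, hS, hc⟩
        rcases (hiff S).mp hS with rfl | ⟨v, hv, rfl⟩ | rfl
        · rw [hcardU] at hc; omega
        · exact ⟨v, rfl⟩
        · exact ⟨0, rfl⟩
    rw [← Nat.card_eq_of_bijective _ hb, Nat.card_eq_fintype_card, Fintype.card_fin]
  · rw [docNum]
    haveI : Nonempty {S : Finset (Fin (n+1)) //
        IsOcdSet (starGraph n) S ∧ S.card = n + 1} :=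
      ⟨⟨Finset.univ, (hiff _).mpr (Or.inl rfl), hcardU⟩⟩
    haveI : Subsingleton {S : Finset (Fin (n+1)) //
        IsOcdSet (starGraph n) S ∧ S.card = n + 1} := by
      constructor
      rintro ⟨S, hS, hc⟩ ⟨S', hS', hc'⟩
      have hU : ∀ T : Finset (Fin (n+1)), IsOcdSet (starGraph n) T → T.card = n + 1 →
          T = Finset.univ := by
        intro T hT hTc
        rcases (hiff T).mp hT with rfl | ⟨v, hv, rfl⟩ | rfl
        · rfl
        · rw [hcard v] at hTc; omega
        · rw [hcard 0] at hTc; omega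
      exact Subtype.ext ((hU S hS hc).trans (hU S' hS' hc').symm)
    exact Nat.card_unique
  · intro i hi hi'
    rw [docNum]
    haveI : IsEmpty {S : Finset (Fin (n+1)) //
        IsOcdSet (starGraph n) S ∧ S.card = i} := by
      constructor
      rintro ⟨S, hS, hc⟩
      rcases (hiff S).mp hS with rfl | ⟨v, hv, rfl⟩ | rfl
      · rw [hcardU] at hc; omega
      · rw [hcard v] at hc; omega
      · rw [hcard 0] at hc; omega
    exact Nat.card_of_isEmpty
end

section
/- For the path P_n on n ≥ 3 vertices, d_oc(P_n, n) = 1, d_oc(P_n, n−1) = n, d_oc(P_n, n−2) = n−3, and d_oc(P_n, i) = 0 for every i < n−2. -/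
lemma path_walk_support {n : ℕ} {u v : Fin n} (W : (SimpleGraph.pathGraph n).Walk u v) :
    ∀ k : ℕ, ((u.val ≤ k ∧ k ≤ v.val) ∨ (v.val ≤ k ∧ k ≤ u.val)) →
      ∃ x ∈ W.support, x.val = k := by
  induction W with
  | nil => rename_i w; intro k hk; exact ⟨w, by simp, by omega⟩
  | @cons a b c h p ih =>
    intro k hk
    by_cases hka : k = a.val
    · exact ⟨a, by simp, hka.symm⟩
    · have hadj := SimpleGraph.pathGraph_adj.mp h
      obtain ⟨x, hx, hxk⟩ := ih k (by omega)
      exact ⟨x, by simp [hx], hxk⟩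

lemma interval_notMem {n : ℕ} {S : Finset (Fin n)}
    (hc : ((SimpleGraph.pathGraph n).induce ((↑S : Set (Fin n))ᶜ)).Connected)
    {a b : Fin n} (ha : a ∉ S) (hb : b ∉ S) (k : Fin n)
    (h1 : a.val ≤ k.val) (h2 : k.val ≤ b.val) : k ∉ S := by
  have ha' : a ∈ ((↑S : Set (Fin n))ᶜ) := by simpa using ha
  have hb' : b ∈ ((↑S : Set (Fin n))ᶜ) := by simpa using hb
  obtain ⟨W⟩ := hc.preconnected ⟨a, ha'⟩ ⟨b, hb'⟩
  obtain ⟨x, hx, hxk⟩ := path_walk_support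
    (W.map (SimpleGraph.Embedding.induce ((↑S : Set (Fin n))ᶜ)).toHom) k.val (Or.inl ⟨h1, h2⟩)
  rw [SimpleGraph.Walk.support_map, List.mem_map] at hx
  obtain ⟨y, -, rfl⟩ := hx
  have hyk : (y : Fin n) = k := Fin.ext hxk
  have h2 := y.2
  rw [hyk] at h2
  simpa using h2

lemma ocd_univ {n : ℕ} : IsOcdSet (SimpleGraph.pathGraph n) Finset.univ :=
  ⟨fun v hv => absurd (Finset.mem_univ v) hv, Or.inl rfl⟩

lemma ocd_singleton_compl {n : ℕ} (hn : 2 ≤ n) (a : Fin n) :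
    IsOcdSet (SimpleGraph.pathGraph n) ({a}ᶜ) := by
  constructor
  · intro v hv
    simp only [Finset.mem_compl, Finset.mem_singleton, not_not] at hv
    have hdom : ∃ u ∈ ({a}ᶜ : Finset (Fin n)), (SimpleGraph.pathGraph n).Adj u a := by
      by_cases h : a.val + 1 < n
      · refine ⟨⟨a.val + 1, h⟩, ?_, SimpleGraph.pathGraph_adj.mpr (Or.inr rfl)⟩
        simp only [Finset.mem_compl, Finset.mem_singleton, ne_eq, Fin.ext_iff]
        omega
      · have h1 : 1 ≤ a.val := by have := a.isLt; omega
        refine ⟨⟨a.val - 1, by omega⟩, ?_,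
          SimpleGraph.pathGraph_adj.mpr (Or.inl (by show a.val - 1 + 1 = a.val; omega))⟩
        simp only [Finset.mem_compl, Finset.mem_singleton, Fin.ext_iff]
        omega
    exact hv ▸ hdom
  · right
    have hset : ((↑({a}ᶜ : Finset (Fin n)) : Set (Fin n))ᶜ) = {a} := by simp
    rw [hset]
    haveI : Nonempty ({a} : Set (Fin n)) := ⟨⟨a, rfl⟩⟩
    exact ⟨fun x y => (Subtype.ext ((Set.mem_singleton_iff.mp x.2).trans
      (Set.mem_singleton_iff.mp y.2).symm)) ▸ SimpleGraph.Reachable.refl x⟩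

lemma ocd_pair_compl {n : ℕ} (a : ℕ) (h1 : 1 ≤ a) (h2 : a + 2 < n) :
    IsOcdSet (SimpleGraph.pathGraph n)
      ({(⟨a, by omega⟩ : Fin n), ⟨a + 1, by omega⟩}ᶜ) := by
  constructor
  · intro v hv
    simp only [Finset.mem_compl, Finset.mem_insert, Finset.mem_singleton, not_not] at hv
    have hd1 : ∃ u ∈ ({(⟨a, by omega⟩ : Fin n), ⟨a + 1, by omega⟩}ᶜ : Finset (Fin n)),
        (SimpleGraph.pathGraph n).Adj u ⟨a, by omega⟩ := by
      refine ⟨⟨a - 1, by omega⟩, ?_,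
        SimpleGraph.pathGraph_adj.mpr (Or.inl (by show a - 1 + 1 = a; omega))⟩
      simp only [Finset.mem_compl, Finset.mem_insert, Finset.mem_singleton, Fin.ext_iff]
      push_neg
      constructor <;> (show ¬ _ = _ ; omega)
    have hd2 : ∃ u ∈ ({(⟨a, by omega⟩ : Fin n), ⟨a + 1, by omega⟩}ᶜ : Finset (Fin n)),
        (SimpleGraph.pathGraph n).Adj u ⟨a + 1, by omega⟩ := by
      refine ⟨⟨a + 2, by omega⟩, ?_,
        SimpleGraph.pathGraph_adj.mpr (Or.inr (by show a + 1 + 1 = a + 2; omega))⟩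
      simp only [Finset.mem_compl, Finset.mem_insert, Finset.mem_singleton, Fin.ext_iff]
      push_neg
      constructor <;> (show ¬ _ = _ ; omega)
    rcases hv with rfl | rfl
    · exact hd1
    · exact hd2
  · right
    have hset : ((↑(({(⟨a, by omega⟩ : Fin n), ⟨a + 1, by omega⟩} : Finset (Fin n))ᶜ)
        : Set (Fin n))ᶜ) = {⟨a, by omega⟩, ⟨a + 1, by omega⟩} := by
      rw [Finset.coe_compl, compl_compl, Finset.coe_insert, Finset.coe_singleton]
    rw [hset]
    set x : Fin n := ⟨a, by omega⟩
    set y : Fin n := ⟨a + 1, by omega⟩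
    have hmem : ∀ z : ({x, y} : Set (Fin n)), z = ⟨x, by simp⟩ ∨ z = ⟨y, by simp⟩ := by
      rintro ⟨z, hz | hz⟩
      · left; exact Subtype.ext hz
      · right; exact Subtype.ext hz
    have hadj : ((SimpleGraph.pathGraph n).induce ({x, y} : Set (Fin n))).Adj
        ⟨x, by simp⟩ ⟨y, by simp⟩ := SimpleGraph.pathGraph_adj.mpr (Or.inl rfl)
    haveI : Nonempty ({x, y} : Set (Fin n)) := ⟨⟨x, by simp⟩⟩
    refine ⟨fun z w => ?_⟩
    rcases hmem z with rfl | rfl <;> rcases hmem w with rfl | rfl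
    · exact SimpleGraph.Reachable.refl _
    · exact hadj.reachable
    · exact hadj.symm.reachable
    · exact SimpleGraph.Reachable.refl _

lemma not_univ_of_card_lt {n : ℕ} {S : Finset (Fin n)} (h : S.card < n) :
    S ≠ Finset.univ := by
  intro he; rw [he, Finset.card_univ, Fintype.card_fin] at h; omega

lemma no_small {n : ℕ} {S : Finset (Fin n)}
    (hS : IsOcdSet (SimpleGraph.pathGraph n) S) (hcard : S.card + 3 ≤ n) : False := by
  obtain ⟨hdom, hconn⟩ := hS
  have hc := hconn.resolve_left (not_univ_of_card_lt (by omega))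
  have hcompl : (Sᶜ : Finset (Fin n)).card = n - S.card := by
    rw [Finset.card_compl, Fintype.card_fin]
  have hne : (Sᶜ : Finset (Fin n)).Nonempty := by
    rw [← Finset.card_pos, hcompl]; omega
  set a := Finset.min' _ hne with hadef
  set b := Finset.max' _ hne with hbdef
  have ha : a ∉ S := by have := Finset.min'_mem _ hne; simpa using this
  have hb : b ∉ S := by have := Finset.max'_mem _ hne; simpa using this
  have hbetween : ∀ c ∈ (Sᶜ : Finset (Fin n)), a ≤ c ∧ c ≤ b :=
    fun c hc' => ⟨Finset.min'_le _ c hc', Finset.le_max' _ c hc'⟩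
  have hgap : a.val + 2 ≤ b.val := by
    by_contra hlt
    push_neg at hlt
    have hsub : (Sᶜ : Finset (Fin n)) ⊆ {a, b} := by
      intro c hc'
      obtain ⟨h1, h2⟩ := hbetween c hc'
      have h1' : a.val ≤ c.val := h1
      have h2' : c.val ≤ b.val := h2
      simp only [Finset.mem_insert, Finset.mem_singleton, Fin.ext_iff]
      omega
    have := Finset.card_le_card hsub
    have h2 := Finset.card_insert_le a ({b} : Finset (Fin n))
    simp only [Finset.card_singleton] at h2
    omega
  have hm : (⟨a.val + 1, by have := b.isLt; omega⟩ : Fin n) ∉ S :=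
    interval_notMem hc ha hb _ (by simp) (by simp; omega)
  obtain ⟨u, hu, huadj⟩ := hdom _ hm
  have := SimpleGraph.pathGraph_adj.mp huadj
  simp only [Fin.ext_iff] at this
  have huval : u.val = a.val ∨ u.val = a.val + 2 := by omega
  rcases huval with h | h
  · exact interval_notMem hc ha hb u (by omega) (by omega) hu
  · exact interval_notMem hc ha hb u (by omega) (by omega) hu

lemma card_n1_forward {n : ℕ} {S : Finset (Fin n)} (hcard : S.card = n - 1) (hn : 1 ≤ n) :
    ∃ a : Fin n, S = {a}ᶜ := by
  have hcompl : (Sᶜ : Finset (Fin n)).card = 1 := by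
    rw [Finset.card_compl, Fintype.card_fin, hcard]
    have := Finset.card_le_univ S
    rw [Fintype.card_fin] at this
    omega
  obtain ⟨a, ha⟩ := Finset.card_eq_one.mp hcompl
  exact ⟨a, by rw [← compl_compl S, ha]⟩

lemma card_n2_forward {n : ℕ} (hn : 3 ≤ n) {S : Finset (Fin n)}
    (hS : IsOcdSet (SimpleGraph.pathGraph n) S) (hcard : S.card = n - 2) :
    ∃ a : ℕ, ∃ h1 : 1 ≤ a, ∃ h2 : a + 2 < n,
      S = {(⟨a, by omega⟩ : Fin n), ⟨a + 1, by omega⟩}ᶜ := by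
  obtain ⟨hdom, hconn⟩ := hS
  have hc := hconn.resolve_left (not_univ_of_card_lt (by omega))
  have hcompl : (Sᶜ : Finset (Fin n)).card = 2 := by
    rw [Finset.card_compl, Fintype.card_fin, hcard]
    have := Finset.card_le_univ S
    rw [Fintype.card_fin] at this
    omega
  obtain ⟨a, b, hab, hS2⟩ := Finset.card_eq_two.mp hcompl
  wlog hlt : a.val < b.val generalizing a b
  · exact this b a hab.symm (by rw [hS2]; exact Finset.pair_comm a b)
      (by have : a.val ≠ b.val := fun h => hab (Fin.ext h); omega)
  have ha : a ∉ S := by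
    have : a ∈ Sᶜ := by rw [hS2]; simp
    simpa using this
  have hb : b ∉ S := by
    have : b ∈ Sᶜ := by rw [hS2]; simp
    simpa using this
  have hb1 : b.val = a.val + 1 := by
    by_contra hne
    have hm : (⟨a.val + 1, by have := b.isLt; omega⟩ : Fin n) ∉ S :=
      interval_notMem hc ha hb _ (by simp) (by simp; omega)
    have : (⟨a.val + 1, by have := b.isLt; omega⟩ : Fin n) ∈ Sᶜ := by simpa using hm
    rw [hS2] at this
    simp only [Finset.mem_insert, Finset.mem_singleton, Fin.ext_iff] at this
    omega
  obtain ⟨u, hu, huadj⟩ := hdom a ha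
  have hu1 := SimpleGraph.pathGraph_adj.mp huadj
  have ha1 : 1 ≤ a.val := by
    rcases hu1 with h | h
    · omega
    · exfalso
      have : u = b := Fin.ext (by omega)
      rw [this] at hu; exact hb hu
  obtain ⟨w, hw, hwadj⟩ := hdom b hb
  have hw1 := SimpleGraph.pathGraph_adj.mp hwadj
  have hb2 : a.val + 2 < n := by
    rcases hw1 with h | h
    · exfalso
      have : w = a := Fin.ext (by omega)
      rw [this] at hw; exact ha hw
    · have := w.isLt; omega
  refine ⟨a.val, ha1, hb2, ?_⟩
  rw [← compl_compl S, hS2]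
  ext x
  simp only [Finset.mem_compl, Finset.mem_insert, Finset.mem_singleton, Fin.ext_iff, not_or]
  omega

def pairComplSet (n j : ℕ) (h : j + 3 < n) : Finset (Fin n) :=
  ({⟨j + 1, by omega⟩, ⟨j + 2, by omega⟩} : Finset (Fin n))ᶜ

lemma pairComplSet_ocd (n j : ℕ) (h : j + 3 < n) :
    IsOcdSet (SimpleGraph.pathGraph n) (pairComplSet n j h) := by
  have he : pairComplSet n j h
      = ({(⟨j + 1, by omega⟩ : Fin n), ⟨(j + 1) + 1, by omega⟩} : Finset (Fin n))ᶜ := by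
    unfold pairComplSet
    ext x
    simp only [Finset.mem_compl, Finset.mem_insert, Finset.mem_singleton, Fin.ext_iff, not_or]
  rw [he]
  exact ocd_pair_compl (j + 1) (by omega) (by omega)

lemma pairComplSet_card (n j : ℕ) (h : j + 3 < n) : (pairComplSet n j h).card = n - 2 := by
  unfold pairComplSet
  rw [Finset.card_compl, Fintype.card_fin,
    Finset.card_insert_of_notMem (by
      simp only [Finset.mem_singleton, Fin.ext_iff]; omega), Finset.card_singleton]

lemma pairComplSet_mem_compl (n j : ℕ) (h : j + 3 < n) (x : Fin n) :
    x ∈ (pairComplSet n j h)ᶜ ↔ (x.val = j + 1 ∨ x.val = j + 2) := by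
  unfold pairComplSet
  rw [compl_compl]
  simp only [Finset.mem_insert, Finset.mem_singleton, Fin.ext_iff]

/-- for the path `P_n` with `n ≥ 3`: `d_oc(P_n, n) = 1`,
`d_oc(P_n, n-1) = n`, `d_oc(P_n, n-2) = n - 3`, and `d_oc(P_n, i) = 0` for `i < n - 2`. -/
theorem stmt_6 (n : ℕ) (hn : 3 ≤ n) :
    docNum (SimpleGraph.pathGraph n) n = 1 ∧
    docNum (SimpleGraph.pathGraph n) (n - 1) = n ∧
    docNum (SimpleGraph.pathGraph n) (n - 2) = n - 3 ∧
    (∀ i : ℕ, i < n - 2 → docNum (SimpleGraph.pathGraph n) i = 0) := by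
  refine ⟨?_, ?_, ?_, ?_⟩
  · -- docNum n = 1
    rw [docNum, Nat.card_eq_one_iff_unique]
    constructor
    · constructor
      intro x y
      apply Subtype.ext
      have hx : x.1 = Finset.univ := by
        apply (Finset.card_eq_iff_eq_univ _).mp
        rw [Fintype.card_fin]; exact x.2.2
      have hy : y.1 = Finset.univ := by
        apply (Finset.card_eq_iff_eq_univ _).mp
        rw [Fintype.card_fin]; exact y.2.2
      rw [hx, hy]
    · exact ⟨⟨Finset.univ, ocd_univ, by rw [Finset.card_univ, Fintype.card_fin]⟩⟩
  · -- docNum (n-1) = n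
    rw [docNum]
    have hb : Function.Bijective (fun a : Fin n =>
        (⟨{a}ᶜ, ocd_singleton_compl (by omega) a,
          by rw [Finset.card_compl, Fintype.card_fin, Finset.card_singleton]⟩ :
        {S : Finset (Fin n) // IsOcdSet (SimpleGraph.pathGraph n) S ∧ S.card = n - 1})) := by
      constructor
      · intro a b hab
        have : ({a}ᶜ : Finset (Fin n)) = {b}ᶜ := congrArg Subtype.val hab
        have := compl_inj_iff.mp this
        exact Finset.singleton_injective this
      · rintro ⟨S, hS, hcard⟩
        obtain ⟨a, rfl⟩ := card_n1_forward hcard (by omega)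
        exact ⟨a, rfl⟩
    rw [← Nat.card_eq_of_bijective _ hb, Nat.card_eq_fintype_card, Fintype.card_fin]
  · -- docNum (n-2) = n - 3
    rw [docNum]
    have hb : Function.Bijective (fun j : Fin (n - 3) =>
        (⟨pairComplSet n j.val (by have := j.isLt; omega),
          pairComplSet_ocd n j.val (by have := j.isLt; omega),
          pairComplSet_card n j.val (by have := j.isLt; omega)⟩ :
        {S : Finset (Fin n) // IsOcdSet (SimpleGraph.pathGraph n) S ∧ S.card = n - 2})) := by
      constructor
      · intro j1 j2 hj
        have h1 : pairComplSet n j1.val (by have := j1.isLt; omega)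
            = pairComplSet n j2.val (by have := j2.isLt; omega) := congrArg Subtype.val hj
        have hm1 : (⟨j1.val + 1, by have := j1.isLt; omega⟩ : Fin n)
            ∈ (pairComplSet n j1.val (by have := j1.isLt; omega))ᶜ :=
          (pairComplSet_mem_compl n j1.val (by have := j1.isLt; omega) _).mpr (Or.inl rfl)
        rw [h1] at hm1
        have h3 := (pairComplSet_mem_compl n j2.val (by have := j2.isLt; omega) _).mp hm1
        have hm2 : (⟨j2.val + 1, by have := j2.isLt; omega⟩ : Fin n)
            ∈ (pairComplSet n j2.val (by have := j2.isLt; omega))ᶜ :=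
          (pairComplSet_mem_compl n j2.val (by have := j2.isLt; omega) _).mpr (Or.inl rfl)
        rw [← h1] at hm2
        have h4 := (pairComplSet_mem_compl n j1.val (by have := j1.isLt; omega) _).mp hm2
        have h3' : j1.val + 1 = j2.val + 1 ∨ j1.val + 1 = j2.val + 2 := h3
        have h4' : j2.val + 1 = j1.val + 1 ∨ j2.val + 1 = j1.val + 2 := h4
        exact Fin.ext (by omega)
      · rintro ⟨S, hS, hcard⟩
        obtain ⟨a, ha1, ha2, hSe⟩ := card_n2_forward hn hS hcard
        refine ⟨⟨a - 1, by omega⟩, ?_⟩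
        apply Subtype.ext
        show pairComplSet n (a - 1) (by omega) = S
        rw [hSe]
        unfold pairComplSet
        ext x
        simp only [Finset.mem_compl, Finset.mem_insert, Finset.mem_singleton, Fin.ext_iff,
          not_or]
        omega
    rw [← Nat.card_eq_of_bijective _ hb, Nat.card_eq_fintype_card, Fintype.card_fin]
  · -- small i
    intro i hi
    rw [docNum]
    haveI : IsEmpty {S : Finset (Fin n) // IsOcdSet (SimpleGraph.pathGraph n) S ∧ S.card = i} :=
      ⟨fun x => no_small x.2.1 (by have := x.2.2; omega)⟩
    exact Nat.card_of_isEmpty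
end

section
/- For the cycle C_n on n ≥ 3 vertices, d_oc(C_n, n) = 1, d_oc(C_n, n−1) = n, d_oc(C_n, n−2) = n, and d_oc(C_n, i) = 0 for every i < n−2. -/
open scoped Classical in
lemma docNum_eq_filter {V : Type*} [Fintype V] (G : SimpleGraph V) (i : ℕ) :
    docNum G i = (Finset.univ.filter
      (fun S : Finset V => IsOcdSet G S ∧ S.card = i)).card := by
  rw [docNum, Nat.card_eq_fintype_card, Fintype.card_subtype]

/-- In a graph where every vertex has at most one neighbour, reachability implies
equality or adjacency. -/
lemma reach_degle {W : Type*} {H : SimpleGraph W}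
    (hdeg : ∀ v a b : W, H.Adj v a → H.Adj v b → a = b) {x y : W}
    (h : H.Reachable x y) : x = y ∨ H.Adj x y := by
  obtain ⟨w⟩ := h
  induction w with
  | nil => exact Or.inl rfl
  | @cons u v z h p ih =>
    rcases ih with rfl | hvz
    · exact Or.inr h
    · exact Or.inl (hdeg v u z h.symm hvz)

lemma connected_singleton {V : Type*} (G : SimpleGraph V) {s : Set V} {v : V}
    (hs : s = {v}) : (G.induce s).Connected := by
  subst hs
  haveI : Nonempty ({v} : Set V) := ⟨⟨v, rfl⟩⟩
  refine ⟨fun a b => ?_⟩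
  have : a = b := Subtype.ext (a.2.trans b.2.symm)
  exact this ▸ SimpleGraph.Reachable.refl a

lemma connected_pair {V : Type*} {G : SimpleGraph V} {a b : V} (hab : G.Adj a b)
    {s : Set V} (hs : s = {a, b}) : (G.induce s).Connected := by
  subst hs
  haveI : Nonempty ({a, b} : Set V) := ⟨⟨a, Or.inl rfl⟩⟩
  refine ⟨?_⟩
  rintro ⟨x, hx | hx⟩ ⟨y, hy | hy⟩
  · subst hx; subst hy; exact SimpleGraph.Reachable.refl _
  · subst hx; rcases hy with rfl
    exact SimpleGraph.Adj.reachable (by simpa using hab)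
  · rcases hx with rfl; subst hy
    exact SimpleGraph.Adj.reachable (by simpa using hab.symm)
  · rcases hx with rfl; rcases hy with rfl; exact SimpleGraph.Reachable.refl _

/-- If every vertex equals `x` or `y`, reachability of distinct `x`, `y` implies adjacency. -/
lemma adj_of_two {W : Type*} {H : SimpleGraph W} {x y : W} (hxy : x ≠ y)
    (hW : ∀ c : W, c = x ∨ c = y) (h : H.Reachable x y) : H.Adj x y := by
  obtain ⟨w⟩ := h
  cases w with
  | nil => exact absurd rfl hxy
  | cons h' p =>
    rename_i c
    rcases hW c with rfl | rfl
    · exact absurd h' H.irrefl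
    · exact h'

section Cycle

open Finset SimpleGraph

variable {m : ℕ}

lemma fin_one_ne_zero' : (1 : Fin (m + 3)) ≠ 0 := by
  simp [Fin.ext_iff]

lemma fin_two_ne_zero' : (2 : Fin (m + 3)) ≠ 0 := by
  have h : ((2 : Fin (m + 3)) : ℕ) = 2 % (m + 3) := rfl
  intro h0
  rw [h0] at h
  simp [Nat.mod_eq_of_lt (by omega : 2 < m + 3)] at h

lemma cyc_adj {u v : Fin (m + 3)} :
    (cycleGraph (m + 3)).Adj u v ↔ u - v = 1 ∨ v - u = 1 :=
  SimpleGraph.cycleGraph_adj (n := m + 1)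

lemma cyc_adj_succ (v : Fin (m + 3)) : (cycleGraph (m + 3)).Adj v (v + 1) := by
  rw [cyc_adj]; right; simp

/-- The neighbours of `v` are `v - 1` and `v + 1`. -/
lemma cyc_nbr {u v : Fin (m + 3)} (h : (cycleGraph (m + 3)).Adj u v) :
    u = v - 1 ∨ u = v + 1 := by
  rw [cyc_adj] at h
  rcases h with h | h
  · exact Or.inr ((sub_eq_iff_eq_add.mp h).trans (add_comm 1 v))
  · refine Or.inl ?_
    rw [eq_sub_iff_add_eq]
    exact (add_comm u 1).trans (sub_eq_iff_eq_add.mp h).symm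

lemma pair_card (v : Fin (m + 3)) : ({v, v + 1} : Finset (Fin (m + 3))).card = 2 :=
  Finset.card_pair (by simpa using fin_one_ne_zero'.symm)

/-- Characterisation of ocd-sets of cardinality `m + 3` (everything). -/
lemma ocd_full {S : Finset (Fin (m + 3))} :
    (IsOcdSet (cycleGraph (m + 3)) S ∧ S.card = m + 3) ↔ S = Finset.univ := by
  constructor
  · rintro ⟨-, hcard⟩
    rw [← Finset.card_eq_iff_eq_univ, hcard]
    simp
  · rintro rfl
    refine ⟨⟨fun v hv => absurd (Finset.mem_univ v) hv, Or.inl rfl⟩, by simp⟩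

/-- Characterisation of ocd-sets of cardinality `m + 2`. -/
lemma ocd_sub1 {S : Finset (Fin (m + 3))} :
    (IsOcdSet (cycleGraph (m + 3)) S ∧ S.card = m + 2) ↔
      ∃ v, S = Finset.univ.erase v := by
  constructor
  · rintro ⟨-, hcard⟩
    have hT : (Finset.univ \ S).card = 1 := by
      rw [Finset.card_sdiff_of_subset (Finset.subset_univ S), Finset.card_univ, hcard]
      simp
    obtain ⟨v, hv⟩ := Finset.card_eq_one.mp hT
    refine ⟨v, ?_⟩
    have := Finset.sdiff_sdiff_eq_self (Finset.subset_univ S)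
    rw [hv] at this
    rw [← this, Finset.sdiff_singleton_eq_erase]
  · rintro ⟨v, rfl⟩
    have hvne : v + 1 ≠ v := by
      simp [fin_one_ne_zero']
    refine ⟨⟨?_, Or.inr ?_⟩, by simp [Finset.card_erase_of_mem]⟩
    · intro u hu
      have hu' : u = v := by simpa using hu
      subst hu'
      exact ⟨u + 1, by simp [hvne], (cyc_adj_succ u).symm⟩
    · apply connected_singleton (v := v)
      ext x
      simp [eq_comm]
/-- Characterisation of ocd-sets of cardinality `m + 1`. -/
lemma ocd_sub2 {S : Finset (Fin (m + 3))} :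
    (IsOcdSet (cycleGraph (m + 3)) S ∧ S.card = m + 1) ↔
      ∃ v, S = Finset.univ \ {v, v + 1} := by
  have compl_eq : ∀ S : Finset (Fin (m + 3)),
      ((↑S : Set (Fin (m + 3)))ᶜ = ↑(Finset.univ \ S)) := by
    intro S
    simp [Finset.coe_sdiff, Set.compl_eq_univ_diff]
  constructor
  · rintro ⟨⟨hdom, hconn⟩, hcard⟩
    have hT : (Finset.univ \ S).card = 2 := by
      rw [Finset.card_sdiff_of_subset (Finset.subset_univ S), Finset.card_univ, hcard,
        Fintype.card_fin]
      omega
    obtain ⟨a, b, hab, hTeq⟩ := Finset.card_eq_two.mp hT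
    have hSne : S ≠ Finset.univ := by
      intro h
      rw [h, Finset.card_univ, Fintype.card_fin] at hcard
      omega
    rcases hconn with h | hconn
    · exact absurd h hSne
    have haT : a ∈ Finset.univ \ S := by rw [hTeq]; simp
    have hbT : b ∈ Finset.univ \ S := by rw [hTeq]; simp
    have haS : (a : Fin (m + 3)) ∈ (↑S : Set (Fin (m + 3)))ᶜ := by
      rw [compl_eq]; exact_mod_cast haT
    have hbS : (b : Fin (m + 3)) ∈ (↑S : Set (Fin (m + 3)))ᶜ := by
      rw [compl_eq]; exact_mod_cast hbT
    set pa : ((↑S : Set (Fin (m + 3)))ᶜ : Set _) := ⟨a, haS⟩ with hpa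
    set pb : ((↑S : Set (Fin (m + 3)))ᶜ : Set _) := ⟨b, hbS⟩ with hpb
    have hW : ∀ c : ((↑S : Set (Fin (m + 3)))ᶜ : Set _), c = pa ∨ c = pb := by
      rintro ⟨c, hc⟩
      rw [compl_eq] at hc
      have : c ∈ Finset.univ \ S := by exact_mod_cast hc
      rw [hTeq] at this
      rcases Finset.mem_insert.mp this with h | h
      · exact Or.inl (Subtype.ext h)
      · exact Or.inr (Subtype.ext (Finset.mem_singleton.mp h))
    have hpab : pa ≠ pb := fun h => hab (congrArg Subtype.val h)
    have hadj' := adj_of_two hpab hW (hconn.preconnected pa pb)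
    have hadj : (cycleGraph (m + 3)).Adj a b := by simpa using hadj'
    have hS : S = Finset.univ \ {a, b} := by
      have h2 := Finset.sdiff_sdiff_eq_self (Finset.subset_univ S)
      rw [hTeq] at h2
      exact h2.symm
    rcases cyc_nbr hadj with h | h
    · -- a = b - 1, so b = a + 1
      refine ⟨a, ?_⟩
      have hb : b = a + 1 := by rw [h]; simp
      rw [hS, hb]
    · -- a = b + 1
      refine ⟨b, ?_⟩
      rw [hS, h, Finset.pair_comm]
  · rintro ⟨v, rfl⟩
    have h1 : v + 1 ≠ v := fun h =>
      fin_one_ne_zero' (m := m) (add_eq_left.mp h)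
    have h2 : v + 2 ≠ v := fun h =>
      fin_two_ne_zero' (m := m) (add_eq_left.mp h)
    have h3 : v - 1 ≠ v := fun h => fin_one_ne_zero' (sub_eq_self.mp h)
    have h4 : v - 1 ≠ v + 1 := by
      intro h
      have hv : v = v + 2 :=
        (sub_eq_iff_eq_add.mp h).trans (by open Fin.CommRing in ring)
      exact fin_two_ne_zero' (left_eq_add.mp hv)
    have h5 : v + 2 ≠ v + 1 := by
      intro h
      have h21 : (2 : Fin (m + 3)) = 1 := add_left_cancel h
      have : (1 : Fin (m + 3)) + 1 = 1 + 0 := by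
        open Fin.CommRing in rw [one_add_one_eq_two, h21, add_zero]
      exact fin_one_ne_zero' (add_left_cancel this)
    refine ⟨⟨?_, Or.inr ?_⟩, ?_⟩
    · intro u hu
      have hu' : u = v ∨ u = v + 1 := by
        by_contra hc
        push_neg at hc
        simp [hc.1, hc.2] at hu
      rcases hu' with rfl | rfl
      · refine ⟨u - 1, by simp [h3, h4], ?_⟩
        rw [cyc_adj]; right; simp [sub_sub_cancel]
      · refine ⟨v + 2, by simp [h2, h5], ?_⟩
        have h6 := cyc_adj_succ (v + 1)
        have heq : v + 1 + 1 = v + 2 := by open Fin.CommRing in ring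
        rw [heq] at h6
        exact h6.symm
    · refine connected_pair (cyc_adj_succ v) ?_
      rw [compl_eq]
      have h7 : Finset.univ \ (Finset.univ \ ({v, v + 1} : Finset (Fin (m+3)))) = {v, v+1} :=
        Finset.sdiff_sdiff_eq_self (Finset.subset_univ _)
      rw [h7]
      simp
    · rw [Finset.card_sdiff_of_subset (Finset.subset_univ _), Finset.card_univ, Fintype.card_fin,
        pair_card]
      omega

/-- No ocd-set has cardinality less than `m + 1`. -/
lemma ocd_small {S : Finset (Fin (m + 3))} {i : ℕ} (hi : i < m + 1) :
    ¬(IsOcdSet (cycleGraph (m + 3)) S ∧ S.card = i) := by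
  rintro ⟨⟨hdom, hconn⟩, hcard⟩
  have hSne : S ≠ Finset.univ := by
    intro h
    rw [h, Finset.card_univ, Fintype.card_fin] at hcard
    omega
  rcases hconn with h | hconn
  · exact absurd h hSne
  have hT : 2 < (Finset.univ \ S).card := by
    rw [Finset.card_sdiff_of_subset (Finset.subset_univ S), Finset.card_univ, Fintype.card_fin]
    omega
  obtain ⟨a, b, c, haT, hbT, hcT, hab, hac, hbc⟩ := Finset.two_lt_card_iff.mp hT
  have hmem : ∀ x, x ∈ Finset.univ \ S → (x : Fin (m + 3)) ∈ (↑S : Set (Fin (m + 3)))ᶜ := by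
    intro x hx
    simp only [Finset.mem_sdiff, Finset.mem_univ, true_and] at hx
    simpa using hx
  -- every vertex of the induced graph has at most one neighbour
  have hdeg : ∀ v a b : ((↑S : Set (Fin (m + 3)))ᶜ : Set _),
      (SimpleGraph.induce _ (cycleGraph (m + 3))).Adj v a →
      (SimpleGraph.induce _ (cycleGraph (m + 3))).Adj v b → a = b := by
    rintro ⟨v, hv⟩ ⟨x, hx⟩ ⟨y, hy⟩ hvx hvy
    have hvS : v ∉ S := by simpa using hv
    have hxS : x ∉ S := by simpa using hx
    have hyS : y ∉ S := by simpa using hy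
    obtain ⟨u, huS, huv⟩ := hdom v hvS
    have hGx : (cycleGraph (m + 3)).Adj x v := by
      have : (cycleGraph (m + 3)).Adj v x := by simpa using hvx
      exact this.symm
    have hGy : (cycleGraph (m + 3)).Adj y v := by
      have : (cycleGraph (m + 3)).Adj v y := by simpa using hvy
      exact this.symm
    rcases cyc_nbr huv with hu | hu <;>
      rcases cyc_nbr hGx with hx' | hx' <;>
      rcases cyc_nbr hGy with hy' | hy'
    all_goals first
      | (exact Subtype.ext (hx'.trans hy'.symm))
      | (exfalso; exact hxS (hx'.trans hu.symm ▸ huS))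
      | (exfalso; exact hyS (hy'.trans hu.symm ▸ huS))
  have key : ∀ x y : ((↑S : Set (Fin (m + 3)))ᶜ : Set _), x = y ∨
      (SimpleGraph.induce _ (cycleGraph (m + 3))).Adj x y :=
    fun x y => reach_degle hdeg (hconn.preconnected x y)
  set pa : ((↑S : Set (Fin (m + 3)))ᶜ : Set _) := ⟨a, hmem a haT⟩
  set pb : ((↑S : Set (Fin (m + 3)))ᶜ : Set _) := ⟨b, hmem b hbT⟩
  set pc : ((↑S : Set (Fin (m + 3)))ᶜ : Set _) := ⟨c, hmem c hcT⟩
  have hpab : pa ≠ pb := fun h => hab (congrArg Subtype.val h)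
  have hpac : pa ≠ pc := fun h => hac (congrArg Subtype.val h)
  have hpbc : pb ≠ pc := fun h => hbc (congrArg Subtype.val h)
  have h1 := (key pa pb).resolve_left hpab
  have h2 := (key pa pc).resolve_left hpac
  exact hpbc (hdeg pa pb pc h1 h2)

end Cycle

/-- for the cycle `C_n` with `n ≥ 3`: `d_oc(C_n, n) = 1`,
`d_oc(C_n, n-1) = n`, `d_oc(C_n, n-2) = n`, and `d_oc(C_n, i) = 0` for `i < n - 2`. -/
theorem stmt_7 (n : ℕ) (hn : 3 ≤ n) :
    docNum (SimpleGraph.cycleGraph n) n = 1 ∧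
    docNum (SimpleGraph.cycleGraph n) (n - 1) = n ∧
    docNum (SimpleGraph.cycleGraph n) (n - 2) = n ∧
    (∀ i : ℕ, i < n - 2 → docNum (SimpleGraph.cycleGraph n) i = 0) := by
  classical
  obtain ⟨m, rfl⟩ : ∃ m, n = m + 3 := ⟨n - 3, by omega⟩
  refine ⟨?_, ?_, ?_, ?_⟩
  · rw [docNum_eq_filter]
    have : (Finset.univ.filter
        (fun S : Finset (Fin (m+3)) => IsOcdSet (SimpleGraph.cycleGraph (m+3)) S ∧
          S.card = m + 3)) = {Finset.univ} := by
      ext S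
      simp [ocd_full]
    rw [this, Finset.card_singleton]
  · rw [docNum_eq_filter]
    have : (Finset.univ.filter
        (fun S : Finset (Fin (m+3)) => IsOcdSet (SimpleGraph.cycleGraph (m+3)) S ∧
          S.card = m + 3 - 1)) =
        Finset.univ.image (fun v : Fin (m+3) => Finset.univ.erase v) := by
      ext S
      simp only [Finset.mem_filter, Finset.mem_univ, true_and, Finset.mem_image]
      rw [show m + 3 - 1 = m + 2 from rfl, ocd_sub1]
      simp [eq_comm]
    rw [this, Finset.card_image_of_injective _ ?_, Finset.card_univ, Fintype.card_fin]
    intro a b hab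
    have hab' : Finset.univ.erase a = Finset.univ.erase b := hab
    by_contra hne
    have : a ∈ Finset.univ.erase b := Finset.mem_erase.mpr ⟨hne, Finset.mem_univ a⟩
    rw [← hab'] at this
    exact (Finset.mem_erase.mp this).1 rfl
  · rw [docNum_eq_filter]
    have : (Finset.univ.filter
        (fun S : Finset (Fin (m+3)) => IsOcdSet (SimpleGraph.cycleGraph (m+3)) S ∧
          S.card = m + 3 - 2)) =
        Finset.univ.image (fun v : Fin (m+3) => Finset.univ \ {v, v + 1}) := by
      ext S
      simp only [Finset.mem_filter, Finset.mem_univ, true_and, Finset.mem_image]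
      rw [show m + 3 - 2 = m + 1 from rfl, ocd_sub2]
      simp [eq_comm]
    rw [this, Finset.card_image_of_injective _ ?_, Finset.card_univ, Fintype.card_fin]
    intro a b hab
    have hab' : Finset.univ \ ({a, a+1} : Finset (Fin (m+3))) =
        Finset.univ \ ({b, b+1} : Finset (Fin (m+3))) := hab
    have hmem : ∀ x : Fin (m+3), x ∈ ({a, a+1} : Finset (Fin (m+3))) ↔
        x ∈ ({b, b+1} : Finset (Fin (m+3))) := by
      intro x
      constructor <;> intro hx <;> by_contra hx'
      · have : x ∈ Finset.univ \ ({b, b+1} : Finset (Fin (m+3))) := by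
          simp only [Finset.mem_sdiff, Finset.mem_univ, true_and]; exact hx'
        rw [← hab'] at this
        exact (Finset.mem_sdiff.mp this).2 hx
      · have : x ∈ Finset.univ \ ({a, a+1} : Finset (Fin (m+3))) := by
          simp only [Finset.mem_sdiff, Finset.mem_univ, true_and]; exact hx'
        rw [hab'] at this
        exact (Finset.mem_sdiff.mp this).2 hx
    have ha : a = b ∨ a = b + 1 := by
      have := (hmem a).mp (by simp)
      simpa using this
    have hb : b = a ∨ b = a + 1 := by
      have := (hmem b).mpr (by simp)
      simpa using this
    rcases ha with h | h
    · exact h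
    · rcases hb with h' | h'
      · exact h'.symm
      · exfalso
        rw [h'] at h
        have ha2 : a = a + 2 := h.trans (by open Fin.CommRing in ring)
        exact fin_two_ne_zero' (left_eq_add.mp ha2)
  · intro i hi
    rw [docNum_eq_filter]
    rw [Finset.card_eq_zero]
    ext S
    simp only [Finset.mem_filter, Finset.mem_univ, true_and, Finset.notMem_empty,
      iff_false]
    exact ocd_small (m := m) (by omega)
end

section
/- The outer-connected domination number of the path P_n on n ≥ 4 vertices equals n−2, i.e., the minimum cardinality of an outer-connected dominating set of P_n is n−2. -/
/-- The outer-connected domination number: the minimum cardinality of an ocd-set. -/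
noncomputable def ocdNumber {V : Type*} [Fintype V] (G : SimpleGraph V) : ℕ :=
  sInf {k : ℕ | ∃ S : Finset V, IsOcdSet G S ∧ S.card = k}

/-- Intermediate value property for walks in induced subgraphs of the path graph. -/
lemma walk_ivt {n : ℕ} {T : Set (Fin n)} {x y : T}
    (W : ((SimpleGraph.pathGraph n).induce T).Walk x y) :
    ∀ c : ℕ, ((((x : Fin n) : ℕ) ≤ c ∧ c ≤ ((y : Fin n) : ℕ)) ∨
      (((y : Fin n) : ℕ) ≤ c ∧ c ≤ ((x : Fin n) : ℕ))) →
    ∃ w ∈ W.support, ((w : Fin n) : ℕ) = c := by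
  induction W with
  | nil =>
    intro c h
    rw [SimpleGraph.Walk.support_nil]
    exact ⟨_, List.mem_singleton_self _, by omega⟩
  | @cons u v z h p ih =>
    intro c hc
    by_cases hcu : ((u : Fin n) : ℕ) = c
    · exact ⟨u, by simp, hcu⟩
    · simp only [SimpleGraph.comap_adj, Function.Embedding.coe_subtype,
        SimpleGraph.pathGraph_adj] at h
      obtain ⟨w, hw, hwc⟩ := ih c (by omega)
      exact ⟨w, by simp [hw], hwc⟩

/-- the outer-connected domination number of `P_n` (`n ≥ 4`) is `n - 2`. -/
theorem stmt_8 (n : ℕ) (hn : 4 ≤ n) :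
    ocdNumber (SimpleGraph.pathGraph n) = n - 2 := by
  classical
  set v1 : Fin n := ⟨1, by omega⟩
  set v2 : Fin n := ⟨2, by omega⟩
  set S : Finset (Fin n) := ({v1, v2} : Finset (Fin n))ᶜ with hS
  have hcard : S.card = n - 2 := by
    rw [hS, Finset.card_compl]
    have : ({v1, v2} : Finset (Fin n)).card = 2 := by
      rw [Finset.card_insert_of_notMem (by simp [v1, v2, Fin.ext_iff]), Finset.card_singleton]
    simp [this]
  have hOcd : IsOcdSet (SimpleGraph.pathGraph n) S := by
    constructor
    · intro v hv
      rw [hS, Finset.mem_compl, not_not] at hv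
      simp only [Finset.mem_insert, Finset.mem_singleton] at hv
      rcases hv with rfl | rfl
      · refine ⟨⟨0, by omega⟩, ?_, ?_⟩
        · rw [hS, Finset.mem_compl]
          simp [v1, v2, Fin.ext_iff]
        · rw [SimpleGraph.pathGraph_adj]; left; simp [v1]
      · refine ⟨⟨3, by omega⟩, ?_, ?_⟩
        · rw [hS, Finset.mem_compl]
          simp [v1, v2, Fin.ext_iff]
        · rw [SimpleGraph.pathGraph_adj]; right; simp [v2]
    · right
      have hTset : ((↑S : Set (Fin n))ᶜ) = (↑({v1, v2} : Finset (Fin n)) : Set (Fin n)) := by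
        rw [hS]; push_cast; simp
      rw [hTset]
      have hadj : (SimpleGraph.pathGraph n).Adj v1 v2 := by
        rw [SimpleGraph.pathGraph_adj]; left; simp [v1, v2]
      haveI : Nonempty (↑(↑({v1, v2} : Finset (Fin n)) : Set (Fin n))) := ⟨⟨v1, by simp⟩⟩
      constructor
      · intro a b
        have ha := a.2
        have hb := b.2
        simp only [Finset.coe_insert, Set.mem_insert_iff, Finset.coe_singleton,
          Set.mem_singleton_iff] at ha hb
        rcases ha with ha | ha <;> rcases hb with hb | hb
        · have : a = b := Subtype.ext (ha.trans hb.symm)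
          rw [this]
        · refine SimpleGraph.Adj.reachable ?_
          simp only [SimpleGraph.comap_adj, Function.Embedding.coe_subtype]
          rw [ha, hb]; exact hadj
        · refine SimpleGraph.Adj.reachable ?_
          simp only [SimpleGraph.comap_adj, Function.Embedding.coe_subtype]
          rw [ha, hb]; exact hadj.symm
        · have : a = b := Subtype.ext (ha.trans hb.symm)
          rw [this]
  have hmem : (n - 2) ∈ {k : ℕ | ∃ S : Finset (Fin n), IsOcdSet (SimpleGraph.pathGraph n) S ∧ S.card = k} :=
    ⟨S, hOcd, hcard⟩
  refine le_antisymm (Nat.sInf_le hmem) (le_csInf ⟨_, hmem⟩ ?_)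
  rintro k ⟨A, ⟨hdom, hconn⟩, rfl⟩
  by_contra hlt
  push_neg at hlt
  -- complement of A has at least 3 elements
  have hAcard : Aᶜ.card ≥ 3 := by
    have := Finset.card_compl A
    have hle : A.card ≤ n := by
      have := Finset.card_le_univ A
      simpa using this
    rw [this]
    have : Fintype.card (Fin n) = n := by simp
    omega
  rcases hconn with hA | hconn
  · rw [hA] at hlt; simp at hlt; omega
  -- min, max, middle
  have hne : Aᶜ.Nonempty := Finset.card_pos.mp (by omega)
  set a : Fin n := Aᶜ.min' hne with ha
  set b : Fin n := Aᶜ.max' hne with hb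
  have hab : a < b := Finset.min'_lt_max'_of_card _ (by omega)
  have hmid : (Aᶜ \ {a, b}).Nonempty := by
    rw [← Finset.card_pos]
    have h2 : ({a, b} : Finset (Fin n)).card ≤ 2 := Finset.card_insert_le _ _ |>.trans (by simp)
    have h3 := Finset.card_sdiff_add_card Aᶜ ({a, b} : Finset (Fin n))
    have h4 : Aᶜ.card ≤ (Aᶜ ∪ {a, b}).card := Finset.card_le_card Finset.subset_union_left
    omega
  obtain ⟨m, hm⟩ := hmid
  rw [Finset.mem_sdiff] at hm
  obtain ⟨hmA, hmab⟩ := hm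
  simp only [Finset.mem_insert, Finset.mem_singleton, not_or] at hmab
  have ham : a < m := lt_of_le_of_ne (Finset.min'_le _ _ hmA) (Ne.symm hmab.1)
  have hmb : m < b := lt_of_le_of_ne (Finset.le_max' _ _ hmA) hmab.2
  have hmval1 : 1 ≤ (m : ℕ) := by
    have : (a : ℕ) < (m : ℕ) := ham
    omega
  have hmvaln : (m : ℕ) + 1 < n := by
    have : (m : ℕ) < (b : ℕ) := hmb
    have := b.2
    omega
  -- membership in the set complement
  have hmemT : ∀ x : Fin n, x ∈ Aᶜ → x ∈ ((↑A : Set (Fin n))ᶜ) := by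
    intro x hx
    rw [Finset.mem_compl] at hx
    simpa using hx
  have haT := hmemT a (Finset.min'_mem _ _)
  have hbT := hmemT b (Finset.max'_mem _ _)
  have hmT := hmemT m hmA
  -- m-1 is in Aᶜ
  have hprev : ((⟨(m : ℕ) - 1, by omega⟩ : Fin n)) ∉ A := by
    obtain ⟨W⟩ := hconn.preconnected ⟨a, haT⟩ ⟨m, hmT⟩
    obtain ⟨w, _, hwc⟩ := walk_ivt W ((m : ℕ) - 1)
      (by have h' : (a : ℕ) < (m : ℕ) := ham; simp only []; omega)
    have : (w : Fin n) = ⟨(m : ℕ) - 1, by omega⟩ := Fin.ext hwc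
    have hw2 := w.2
    rw [this] at hw2
    simpa using hw2
  have hnext : ((⟨(m : ℕ) + 1, by omega⟩ : Fin n)) ∉ A := by
    obtain ⟨W⟩ := hconn.preconnected ⟨m, hmT⟩ ⟨b, hbT⟩
    obtain ⟨w, _, hwc⟩ := walk_ivt W ((m : ℕ) + 1)
      (by have h' : (m : ℕ) < (b : ℕ) := hmb; simp only []; omega)
    have : (w : Fin n) = ⟨(m : ℕ) + 1, by omega⟩ := Fin.ext hwc
    have hw2 := w.2
    rw [this] at hw2
    simpa using hw2
  -- m is not dominated
  have hmnA : m ∉ A := Finset.mem_compl.mp hmA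
  obtain ⟨u, huA, hadj⟩ := hdom m hmnA
  rw [SimpleGraph.pathGraph_adj] at hadj
  rcases hadj with h | h
  · have : u = (⟨(m : ℕ) - 1, by omega⟩ : Fin n) := Fin.ext (show (u : ℕ) = (m : ℕ) - 1 by omega)
    rw [this] at huA; exact hprev huA
  · have : u = (⟨(m : ℕ) + 1, by omega⟩ : Fin n) := Fin.ext (show (u : ℕ) = (m : ℕ) + 1 by omega)
    rw [this] at huA; exact hnext huA
end

section
/- The outer-connected domination number of the cycle C_n on n ≥ 4 vertices equals n−2, i.e., the minimum cardinality of an outer-connected dominating set of C_n is n−2. -/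
open Fin.CommRing

/-- In a graph of max degree ≤ 1, walk-connected distinct vertices are adjacent. -/
lemma reach_adj {V : Type*} {G : SimpleGraph V}
    (h1 : ∀ v x y : V, G.Adj v x → G.Adj v y → x = y)
    {u v : V} (w : G.Walk u v) (hne : u ≠ v) : G.Adj u v := by
  induction w with
  | nil => exact absurd rfl hne
  | @cons a x c h q ih =>
    by_cases hxc : x = c
    · exact hxc ▸ h
    · exact absurd (h1 x c a (ih hxc) h.symm) (fun hh => hne hh.symm)

lemma cycle_adj_iff {m : ℕ} (a b : Fin (m+4)) :
    (SimpleGraph.cycleGraph (m+4)).Adj a b ↔ a - b = 1 ∨ b - a = 1 := by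
  rw [SimpleGraph.cycleGraph_adj']
  have h1 : ((1 : Fin (m+4)) : ℕ) = 1 := by
    rw [Fin.val_one', Nat.mod_eq_of_lt (by omega)]
  simp [Fin.ext_iff, h1]

lemma neighbors_cycle {m : ℕ} {a x : Fin (m+4)}
    (h : (SimpleGraph.cycleGraph (m+4)).Adj a x) : x = a - 1 ∨ x = a + 1 := by
  rw [cycle_adj_iff] at h
  rcases h with h | h
  · left; rw [← h]; ring
  · right; rw [← h]; ring

lemma fin2_ne_zero (m : ℕ) : (2 : Fin (m+4)) ≠ 0 := by
  intro h
  have h2 : ((2 : Fin (m+4)) : ℕ) = 2 := by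
    simp [Fin.val_add, show ((2:Fin (m+4))) = 1 + 1 from by norm_num]
  rw [h] at h2
  simp at h2

lemma fin1_ne_zero (m : ℕ) : (1 : Fin (m+4)) ≠ 0 := by
  intro h; apply fin2_ne_zero m
  calc (2 : Fin (m+4)) = 1 + 1 := by norm_num
    _ = 0 := by rw [h]; ring

/-- the outer-connected domination number of `C_n` (`n ≥ 4`) is `n - 2`. -/
theorem stmt_9 (n : ℕ) (hn : 4 ≤ n) :
    ocdNumber (SimpleGraph.cycleGraph n) = n - 2 := by
  obtain ⟨m, rfl⟩ : ∃ m, n = m + 4 := ⟨n - 4, by omega⟩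
  have h2 : (m + 4) - 2 = m + 2 := by omega
  rw [h2, ocdNumber]
  set G := SimpleGraph.cycleGraph (m+4) with hG
  have hone : (1 : Fin (m+4)) ≠ 0 := fin1_ne_zero m
  have htwo1 : (2 : Fin (m+4)) ≠ 1 := by
    intro h; apply hone
    calc (1 : Fin (m+4)) = 2 - 1 := by ring
      _ = 0 := by rw [h]; ring
  set S : Finset (Fin (m+4)) := Finset.univ \ {0, 1} with hS
  have hcard01 : ({0, 1} : Finset (Fin (m+4))).card = 2 := by
    rw [Finset.card_insert_of_notMem (by
      simp only [Finset.mem_singleton]; exact fun h => hone h.symm),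
      Finset.card_singleton]
  have hScard : S.card = m + 2 := by
    rw [hS, Finset.card_sdiff_of_subset (Finset.subset_univ _), hcard01,
      Finset.card_univ, Fintype.card_fin]
    omega
  have hSocd : IsOcdSet G S := by
    constructor
    · intro v hv
      rw [hS] at hv
      simp only [Finset.mem_sdiff, Finset.mem_univ, true_and, not_not,
        Finset.mem_insert, Finset.mem_singleton] at hv
      rcases hv with rfl | rfl
      · refine ⟨-1, ?_, ?_⟩
        · rw [hS]
          simp only [Finset.mem_sdiff, Finset.mem_univ, true_and,
            Finset.mem_insert, Finset.mem_singleton]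
          push_neg
          constructor
          · intro h; apply hone
            calc (1:Fin (m+4)) = -(-1) := by ring
              _ = 0 := by rw [h]; ring
          · intro h; apply fin2_ne_zero m
            calc (2:Fin (m+4)) = 1 - (-1) := by ring
              _ = 0 := by rw [h]; ring
        · rw [hG, cycle_adj_iff]; right; ring
      · refine ⟨2, ?_, ?_⟩
        · rw [hS]
          simp only [Finset.mem_sdiff, Finset.mem_univ, true_and,
            Finset.mem_insert, Finset.mem_singleton]
          push_neg
          exact ⟨fin2_ne_zero m, htwo1⟩
        · rw [hG, cycle_adj_iff]; left; norm_num
    · right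
      have hmem : ∀ x : Fin (m+4), x ∈ ((↑S : Set (Fin (m+4)))ᶜ) ↔ x = 0 ∨ x = 1 := by
        intro x; rw [hS]; simp; tauto
      have hadj01 : G.Adj 0 1 := by rw [hG, cycle_adj_iff]; right; norm_num
      haveI hne : Nonempty ((↑S : Set (Fin (m+4)))ᶜ : Set (Fin (m+4))) :=
        ⟨⟨0, (hmem 0).2 (Or.inl rfl)⟩⟩
      apply SimpleGraph.Connected.mk
      rintro ⟨a, ha⟩ ⟨b, hb⟩
      have ha' := (hmem a).1 ha
      have hb' := (hmem b).1 hb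
      rcases ha' with rfl | rfl <;> rcases hb' with rfl | rfl
      · exact SimpleGraph.Reachable.refl _
      · exact SimpleGraph.Adj.reachable (by exact hadj01)
      · exact SimpleGraph.Adj.reachable (by exact hadj01.symm)
      · exact SimpleGraph.Reachable.refl _
  apply le_antisymm
  · apply Nat.sInf_le
    rw [Set.mem_setOf_eq]
    exact ⟨S, hSocd, hScard⟩
  · refine le_csInf ⟨m + 2, Set.mem_setOf_eq ▸ ⟨S, hSocd, hScard⟩⟩ ?_
    rintro k ⟨T, ⟨hTdom, hTconn⟩, rfl⟩
    rcases hTconn with rfl | hTconn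
    · rw [Finset.card_univ, Fintype.card_fin]; omega
    by_contra hlt
    push_neg at hlt
    have hTc : 3 ≤ (Finset.univ \ T).card := by
      rw [Finset.card_sdiff_of_subset (Finset.subset_univ T), Finset.card_univ, Fintype.card_fin]
      omega
    have hdeg : ∀ v x y : ((↑T : Set (Fin (m+4)))ᶜ : Set (Fin (m+4))),
        (G.induce ((↑T : Set (Fin (m+4)))ᶜ)).Adj v x →
        (G.induce ((↑T : Set (Fin (m+4)))ᶜ)).Adj v y → x = y := by
      rintro ⟨v, hv⟩ ⟨x, hx⟩ ⟨y, hy⟩ hvx hvy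
      have hvx' : G.Adj v x := hvx
      have hvy' : G.Adj v y := hvy
      rw [hG] at hvx' hvy'
      obtain ⟨u, huT, huv⟩ := hTdom v hv
      rw [hG] at huv
      have hu := neighbors_cycle huv.symm
      have hx' := neighbors_cycle hvx'
      have hy' := neighbors_cycle hvy'
      have hxT : x ∉ T := hx
      have hyT : y ∉ T := hy
      apply Subtype.ext
      show x = y
      rcases hu with rfl | rfl
      · rcases hx' with rfl | rfl
        · exact absurd huT hxT
        · rcases hy' with rfl | rfl
          · exact absurd huT hyT
          · rfl
      · rcases hx' with rfl | rfl
        · rcases hy' with rfl | rfl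
          · rfl
          · exact absurd huT hyT
        · exact absurd huT hxT
    obtain ⟨a, ha, b, hb, c, hc, hab, hac, hbc⟩ :
        ∃ a ∈ Finset.univ \ T, ∃ b ∈ Finset.univ \ T, ∃ c ∈ Finset.univ \ T,
          a ≠ b ∧ a ≠ c ∧ b ≠ c := by
      obtain ⟨a, ha⟩ := Finset.card_pos.mp (by omega : 0 < (Finset.univ \ T).card)
      have g2 : 0 < ((Finset.univ \ T).erase a).card := by
        rw [Finset.card_erase_of_mem ha]; omega
      obtain ⟨b, hb⟩ := Finset.card_pos.mp g2
      have g3 : 0 < (((Finset.univ \ T).erase a).erase b).card := by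
        rw [Finset.card_erase_of_mem hb, Finset.card_erase_of_mem ha]; omega
      obtain ⟨c, hc⟩ := Finset.card_pos.mp g3
      refine ⟨a, ha, b, Finset.mem_of_mem_erase hb,
        c, Finset.mem_of_mem_erase (Finset.mem_of_mem_erase hc), ?_, ?_, ?_⟩
      · exact fun h => Finset.ne_of_mem_erase hb h.symm
      · exact fun h => Finset.ne_of_mem_erase (Finset.mem_of_mem_erase hc) h.symm
      · exact fun h => Finset.ne_of_mem_erase hc h.symm
    have haC : a ∈ ((↑T : Set (Fin (m+4)))ᶜ) := by
      simpa using (Finset.mem_sdiff.mp ha).2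
    have hbC : b ∈ ((↑T : Set (Fin (m+4)))ᶜ) := by
      simpa using (Finset.mem_sdiff.mp hb).2
    have hcC : c ∈ ((↑T : Set (Fin (m+4)))ᶜ) := by
      simpa using (Finset.mem_sdiff.mp hc).2
    obtain ⟨w1⟩ := hTconn ⟨a, haC⟩ ⟨b, hbC⟩
    obtain ⟨w2⟩ := hTconn ⟨a, haC⟩ ⟨c, hcC⟩
    have hadj1 := reach_adj hdeg w1 (fun h => hab (congrArg Subtype.val h))
    have hadj2 := reach_adj hdeg w2 (fun h => hac (congrArg Subtype.val h))
    have hadj1' : G.Adj a b := hadj1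
    have hadj2' : G.Adj a c := hadj2
    rw [hG] at hadj1' hadj2'
    obtain ⟨u, huT, huv⟩ := hTdom a haC
    rw [hG] at huv
    have hu := neighbors_cycle huv.symm
    have hb' := neighbors_cycle hadj1'
    have hc' := neighbors_cycle hadj2'
    have hbT : b ∉ T := by simpa using hbC
    have hcT : c ∉ T := by simpa using hcC
    rcases hu with rfl | rfl
    · rcases hb' with rfl | rfl
      · exact hbT huT
      · rcases hc' with rfl | rfl
        · exact hcT huT
        · exact hbc rfl
    · rcases hb' with rfl | rfl
      · rcases hc' with rfl | rfl
        · exact hbc rfl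
        · exact hcT huT
      · exact hbT huT
end

section
/- For the complete bipartite graph K_{m,n} with parts of sizes m ≥ 2 and n ≥ 2, the ocd polynomial satisfies D_oc(K_{m,n}, x) = ((1+x)^m − 1 − x^m)·((1+x)^n − 1 − x^n) + (m+n)·x^{m+n−1} + x^{m+n}, where D_oc(G,x) = Σ_i d_oc(G,i) x^i. -/
/-- The ocd polynomial of `G`: `D_oc(G,x) = Σ_i d_oc(G,i) xⁱ` (as a polynomial over `ℤ`). -/
noncomputable def ocdPoly {V : Type*} [Fintype V] (G : SimpleGraph V) : Polynomial ℤ :=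
  ∑ i ∈ Finset.range (Fintype.card V + 1), Polynomial.C (docNum G i : ℤ) * Polynomial.X ^ i

open Finset Polynomial

lemma ocdPoly_eq_sum {V : Type*} [Fintype V] (G : SimpleGraph V)
    [DecidablePred (IsOcdSet G)] :
    ocdPoly G = ∑ S ∈ univ.filter (IsOcdSet G), (X : ℤ[X]) ^ S.card := by
  classical
  have hd : ∀ i, docNum G i
      = ((univ.filter (IsOcdSet G)).filter (fun S => S.card = i)).card := by
    intro i
    rw [docNum, Nat.card_eq_fintype_card, Fintype.card_subtype, filter_filter]
  rw [ocdPoly]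
  rw [← Finset.sum_fiberwise_of_maps_to (g := fun S : Finset V => S.card)
    (t := Finset.range (Fintype.card V + 1))
    (fun S _ => Finset.mem_range.mpr (Nat.lt_succ_of_le (by
      simpa using Finset.card_le_card (Finset.subset_univ S))))]
  refine Finset.sum_congr rfl fun i _ => ?_
  rw [hd, Finset.sum_congr rfl (fun S hS => by
    rw [(Finset.mem_filter.mp hS).2])]
  simp [mul_comm]

lemma connected_induce_singleton {V : Type*} (G : SimpleGraph V) (v : V) :
    (G.induce {v}).Connected := by
  rw [SimpleGraph.connected_iff]
  refine ⟨fun a b => ?_, ⟨⟨v, rfl⟩⟩⟩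
  have : a = b := Subtype.ext (a.2.trans b.2.symm)
  exact this ▸ SimpleGraph.Reachable.refl _

lemma connected_induce_both {m n : ℕ} (T : Set (Fin m ⊕ Fin n)) (x₀ : Fin m) (y₀ : Fin n)
    (hx : Sum.inl x₀ ∈ T) (hy : Sum.inr y₀ ∈ T) :
    ((completeBipartiteGraph (Fin m) (Fin n)).induce T).Connected := by
  rw [SimpleGraph.connected_iff]
  refine ⟨?_, ⟨⟨_, hx⟩⟩⟩
  have key : ∀ w : T, ((completeBipartiteGraph (Fin m) (Fin n)).induce T).Reachable w
      ⟨Sum.inr y₀, hy⟩ := by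
    rintro ⟨(x | y), hw⟩
    · exact SimpleGraph.Adj.reachable (by simp)
    · refine (SimpleGraph.Adj.reachable (v := (⟨Sum.inl x₀, hx⟩ : T)) (by simp)).trans
        (SimpleGraph.Adj.reachable (by simp))
  intro u v; exact (key u).trans (key v).symm

set_option linter.unreachableTactic false in
set_option linter.unusedTactic false in
lemma not_connected_one_side {m n : ℕ} (T : Set (Fin m ⊕ Fin n))
    (hT : (∀ w ∈ T, Sum.isLeft w = true) ∨ (∀ w ∈ T, Sum.isRight w = true))
    (u v : T) (huv : u ≠ v) :
    ¬ ((completeBipartiteGraph (Fin m) (Fin n)).induce T).Connected := by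
  intro h
  obtain ⟨w⟩ := h.preconnected u v
  cases w with
  | nil => exact huv rfl
  | cons hadj p =>
    rename_i b
    simp only [SimpleGraph.comap_adj, Function.Embedding.coe_subtype,
      completeBipartiteGraph_adj] at hadj
    rcases hT with hall | hall <;>
    · have hb := hall _ b.2
      have hu := hall _ u.2
      rcases hadj with ⟨h2, h3⟩ | ⟨h2, h3⟩ <;>
        simp_all [Sum.isRight_iff, Sum.isLeft_iff] <;>
        first
          | (obtain ⟨y, hy⟩ := h3; exact hall y (hy ▸ b.2))
          | (obtain ⟨y, hy⟩ := h2; exact hall y (hy ▸ u.2))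
          | (obtain ⟨y, hy⟩ := h2; exact hall y (hy ▸ b.2))
          | (obtain ⟨y, hy⟩ := h3; exact hall y (hy ▸ u.2))

lemma ocd_iff_s10 {m n : ℕ} (hm : 2 ≤ m) (hn : 2 ≤ n) (S : Finset (Fin m ⊕ Fin n)) :
    IsOcdSet (completeBipartiteGraph (Fin m) (Fin n)) S ↔
      (S.toLeft.Nonempty ∧ S.toLeft ≠ univ ∧ S.toRight.Nonempty ∧ S.toRight ≠ univ) ∨
      (∃ v, S = univ.erase v) ∨ S = univ := by
  constructor
  · rintro ⟨hdom, hcon⟩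
    by_cases hU : S = univ
    · exact Or.inr (Or.inr hU)
    rcases hcon with hU' | hcon
    · exact absurd hU' hU
    have hScne : Sᶜ.Nonempty := by
      rw [Finset.nonempty_iff_ne_empty]
      intro h
      exact hU (by simpa using congrArg (·ᶜ) h)
    rcases Nat.lt_or_ge Sᶜ.card 2 with hc | hc
    · have hc1 : Sᶜ.card = 1 := by
        have := Finset.card_pos.mpr hScne; omega
      obtain ⟨v, hv⟩ := Finset.card_eq_one.mp hc1
      refine Or.inr (Or.inl ⟨v, ?_⟩)
      have := congrArg (·ᶜ) hv
      simpa [Finset.compl_singleton] using this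
    · obtain ⟨u, hu, v, hv, huv⟩ := Finset.one_lt_card.mp hc
      have hmemT : ∀ w, w ∈ Sᶜ → w ∈ ((↑S : Set (Fin m ⊕ Fin n))ᶜ) := by
        intro w hw
        simpa using Finset.mem_compl.mp hw
      have hLp : S.toLeft ≠ univ := by
        intro hL
        apply not_connected_one_side ((↑S : Set (Fin m ⊕ Fin n))ᶜ)
          (Or.inr ?_) ⟨u, hmemT u hu⟩ ⟨v, hmemT v hv⟩
          (fun h => huv (congrArg Subtype.val h)) hcon
        rintro (x | y) hw
        · exact absurd (by simpa using (Finset.eq_univ_iff_forall.mp hL x)) hw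
        · simp
      have hRp : S.toRight ≠ univ := by
        intro hR
        apply not_connected_one_side ((↑S : Set (Fin m ⊕ Fin n))ᶜ)
          (Or.inl ?_) ⟨u, hmemT u hu⟩ ⟨v, hmemT v hv⟩
          (fun h => huv (congrArg Subtype.val h)) hcon
        rintro (x | y) hw
        · simp
        · exact absurd (by simpa using (Finset.eq_univ_iff_forall.mp hR y)) hw
      have hRne : S.toRight.Nonempty := by
        obtain ⟨x, hx⟩ := not_forall.mp (fun h => hLp (Finset.eq_univ_iff_forall.mpr h))
        obtain ⟨u, hu', hadj⟩ := hdom (Sum.inl x) (by simpa using hx)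
        rcases u with x' | y
        · simp at hadj
        · exact ⟨y, by simpa using hu'⟩
      have hLne : S.toLeft.Nonempty := by
        obtain ⟨y, hy⟩ := not_forall.mp (fun h => hRp (Finset.eq_univ_iff_forall.mpr h))
        obtain ⟨u, hu', hadj⟩ := hdom (Sum.inr y) (by simpa using hy)
        rcases u with x' | y'
        · exact ⟨x', by simpa using hu'⟩
        · simp at hadj
      exact Or.inl ⟨hLne, hLp, hRne, hRp⟩
  · rintro (⟨⟨x₁, hx₁⟩, hLp, ⟨y₁, hy₁⟩, hRp⟩ | ⟨v, rfl⟩ | rfl)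
    · obtain ⟨x₀, hx₀⟩ := not_forall.mp (fun h => hLp (Finset.eq_univ_iff_forall.mpr h))
      obtain ⟨y₀, hy₀⟩ := not_forall.mp (fun h => hRp (Finset.eq_univ_iff_forall.mpr h))
      constructor
      · rintro (x | y) hv
        · exact ⟨Sum.inr y₁, by simpa using hy₁, by simp⟩
        · exact ⟨Sum.inl x₁, by simpa using hx₁, by simp⟩
      · refine Or.inr (connected_induce_both _ x₀ y₀ (by simpa using hx₀)
          (by simpa using hy₀))
    · constructor
      · intro w hw
        have hwv : w = v := by
          by_contra hne
          exact hw (Finset.mem_erase.mpr ⟨hne, Finset.mem_univ w⟩)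
        subst hwv
        rcases w with x | y
        · refine ⟨Sum.inr ⟨0, by omega⟩, Finset.mem_erase.mpr ⟨by simp, Finset.mem_univ _⟩,
            by simp⟩
        · refine ⟨Sum.inl ⟨0, by omega⟩, Finset.mem_erase.mpr ⟨by simp, Finset.mem_univ _⟩,
            by simp⟩
      · refine Or.inr ?_
        have hset : ((↑(univ.erase v) : Set (Fin m ⊕ Fin n))ᶜ) = {v} := by
          ext w
          simp [eq_comm, Finset.mem_erase, not_and_or, em]
        rw [hset]
        exact connected_induce_singleton _ v
    · exact ⟨fun v hv => absurd (Finset.mem_univ v) hv, Or.inl rfl⟩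

lemma factor_sum (k : ℕ) (hk : 1 ≤ k) :
    ∑ T ∈ univ.filter (fun T : Finset (Fin k) => T.Nonempty ∧ T ≠ univ), (X : ℤ[X]) ^ T.card
      = (1 + X) ^ k - 1 - X ^ k := by
  haveI : NeZero k := ⟨by omega⟩
  have hall : ∑ T : Finset (Fin k), (X : ℤ[X]) ^ T.card = (1 + X) ^ k := by
    have h := Fintype.prod_add (fun _ : Fin k => (X : ℤ[X])) (fun _ => 1)
    simp only [Finset.prod_const, one_pow, mul_one, Finset.card_univ, Fintype.card_fin] at h
    rw [← h, add_comm]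
  have hset : univ.filter (fun T : Finset (Fin k) => T.Nonempty ∧ T ≠ univ)
      = univ \ {∅, univ} := by
    ext T
    simp [Finset.nonempty_iff_ne_empty, not_or]
  rw [hset, Finset.sum_sdiff_eq_sub (Finset.subset_univ _), hall,
    Finset.sum_pair (Ne.symm (Finset.univ_nonempty.ne_empty))]
  simp only [Finset.card_empty, pow_zero, Finset.card_univ, Fintype.card_fin]
  ring

open Polynomial in
/-- the ocd polynomial of the complete bipartite graph `K_{m,n}` (`m, n ≥ 2`). -/
theorem stmt_10 (m n : ℕ) (hm : 2 ≤ m) (hn : 2 ≤ n) :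
    ocdPoly (completeBipartiteGraph (Fin m) (Fin n)) =
      ((1 + X) ^ m - 1 - X ^ m) * ((1 + X) ^ n - 1 - X ^ n) +
        C ((m : ℤ) + n) * X ^ (m + n - 1) + X ^ (m + n) := by
  classical
  set G := completeBipartiteGraph (Fin m) (Fin n) with hG
  set s₁ : Finset (Finset (Fin m)) := univ.filter fun T => T.Nonempty ∧ T ≠ univ with hs₁
  set s₂ : Finset (Finset (Fin n)) := univ.filter fun T => T.Nonempty ∧ T ≠ univ with hs₂
  set P₁ : Finset (Finset (Fin m ⊕ Fin n)) :=
    (s₁ ×ˢ s₂).image fun p => p.1.disjSum p.2 with hP₁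
  set P₂ : Finset (Finset (Fin m ⊕ Fin n)) :=
    (univ : Finset (Fin m ⊕ Fin n)).image fun v => univ.erase v with hP₂
  set P₃ : Finset (Finset (Fin m ⊕ Fin n)) := {univ} with hP₃
  have hmemP₁ : ∀ S : Finset (Fin m ⊕ Fin n), S ∈ P₁ ↔
      (S.toLeft.Nonempty ∧ S.toLeft ≠ univ ∧ S.toRight.Nonempty ∧ S.toRight ≠ univ) := by
    intro S
    simp only [hP₁, mem_image, mem_product, hs₁, hs₂, mem_filter, mem_univ, true_and,
      Prod.exists]
    constructor
    · rintro ⟨a, b, ⟨⟨ha1, ha2⟩, hb1, hb2⟩, rfl⟩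
      simpa using ⟨ha1, ha2, hb1, hb2⟩
    · rintro ⟨h1, h2, h3, h4⟩
      exact ⟨_, _, ⟨⟨h1, h2⟩, h3, h4⟩, Finset.toLeft_disjSum_toRight⟩
  have hmemP₂ : ∀ S : Finset (Fin m ⊕ Fin n), S ∈ P₂ ↔ ∃ v, S = univ.erase v := by
    intro S
    simp [hP₂, eq_comm]
  have hfilter : univ.filter (IsOcdSet G) = P₁ ∪ P₂ ∪ P₃ := by
    ext S
    rw [Finset.mem_filter, Finset.mem_union, Finset.mem_union, hmemP₁, hmemP₂, hP₃,
      Finset.mem_singleton]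
    simp only [Finset.mem_univ, true_and]
    rw [ocd_iff_s10 hm hn S, or_assoc]
  -- cardinalities
  have hcard1 : ∀ S ∈ P₁, S.card ≤ m + n - 2 := by
    intro S hS
    obtain ⟨h1, h2, h3, h4⟩ := (hmemP₁ S).mp hS
    have hL : S.toLeft.card ≤ m - 1 := by
      have : S.toLeft.card < m := by
        simpa using Finset.card_lt_card (Finset.ssubset_univ_iff.mpr h2)
      omega
    have hR : S.toRight.card ≤ n - 1 := by
      have : S.toRight.card < n := by
        simpa using Finset.card_lt_card (Finset.ssubset_univ_iff.mpr h4)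
      omega
    have := Finset.card_toLeft_add_card_toRight (u := S)
    omega
  have hcard2 : ∀ S ∈ P₂, S.card = m + n - 1 := by
    intro S hS
    obtain ⟨v, rfl⟩ := (hmemP₂ S).mp hS
    rw [Finset.card_erase_of_mem (Finset.mem_univ v)]
    simp [Fintype.card_sum]
  have hcard3 : ∀ S ∈ P₃, S.card = m + n := by
    intro S hS
    rw [hP₃, Finset.mem_singleton] at hS
    subst hS
    simp [Fintype.card_sum]
  have d12 : Disjoint P₁ P₂ := by
    rw [Finset.disjoint_left]
    intro S h1 h2
    have := hcard1 S h1
    have := hcard2 S h2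
    omega
  have d13 : Disjoint P₁ P₃ := by
    rw [Finset.disjoint_left]
    intro S h1 h2
    have := hcard1 S h1
    have := hcard3 S h2
    omega
  have d23 : Disjoint P₂ P₃ := by
    rw [Finset.disjoint_left]
    intro S h1 h2
    have := hcard2 S h1
    have := hcard3 S h2
    omega
  rw [ocdPoly_eq_sum, hfilter, Finset.sum_union (Finset.disjoint_union_left.mpr ⟨d13, d23⟩),
    Finset.sum_union d12]
  have e3 : ∑ S ∈ P₃, (X : ℤ[X]) ^ S.card = X ^ (m + n) := by
    rw [hP₃, Finset.sum_singleton]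
    congr 1
    simp [Fintype.card_sum]
  have e2 : ∑ S ∈ P₂, (X : ℤ[X]) ^ S.card = C ((m : ℤ) + n) * X ^ (m + n - 1) := by
    rw [hP₂, Finset.sum_image ?inj]
    case inj =>
      intro v _ w _ h
      have := congrArg (·ᶜ) h
      simpa [Finset.compl_erase] using this
    have : ∀ v : Fin m ⊕ Fin n, (X : ℤ[X]) ^ (univ.erase v).card = X ^ (m + n - 1) := by
      intro v
      rw [Finset.card_erase_of_mem (Finset.mem_univ v)]
      congr 1
      simp [Fintype.card_sum]
    rw [Finset.sum_congr rfl (fun v _ => this v), Finset.sum_const]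
    simp only [Finset.card_univ, Fintype.card_sum, Fintype.card_fin, nsmul_eq_mul]
    rw [map_add, Polynomial.C_eq_natCast, Polynomial.C_eq_natCast]
    push_cast
    ring
  have e1 : ∑ S ∈ P₁, (X : ℤ[X]) ^ S.card
      = ((1 + X) ^ m - 1 - X ^ m) * ((1 + X) ^ n - 1 - X ^ n) := by
    rw [hP₁, Finset.sum_image ?inj1]
    case inj1 =>
      intro p _ q _ h
      have h1 := congrArg Finset.toLeft h
      have h2 := congrArg Finset.toRight h
      simp only [Finset.toLeft_disjSum, Finset.toRight_disjSum] at h1 h2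
      exact Prod.ext h1 h2
    rw [Finset.sum_product]
    calc (∑ a ∈ s₁, ∑ b ∈ s₂, (X : ℤ[X]) ^ (a.disjSum b).card)
        = ∑ a ∈ s₁, ∑ b ∈ s₂, (X : ℤ[X]) ^ a.card * X ^ b.card := by
          refine Finset.sum_congr rfl fun a _ => Finset.sum_congr rfl fun b _ => ?_
          rw [Finset.card_disjSum, pow_add]
      _ = (∑ a ∈ s₁, (X : ℤ[X]) ^ a.card) * ∑ b ∈ s₂, (X : ℤ[X]) ^ b.card := by
          rw [Finset.sum_mul_sum]
      _ = ((1 + X) ^ m - 1 - X ^ m) * ((1 + X) ^ n - 1 - X ^ n) := by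
          rw [hs₁, hs₂, factor_sum m (by omega), factor_sum n (by omega)]
  rw [e1, e2, e3]
end

section
/- Let G be the disjoint union of two finite simple graphs G_1 and G_2 on n_1 ≥ 1 and n_2 ≥ 1 vertices respectively. Then the ocd polynomial satisfies D_oc(G, x) = x^{n_2}·D_oc(G_1, x) + x^{n_1}·D_oc(G_2, x) − x^{n_1+n_2}, where D_oc(H,x) = Σ_i d_oc(H,i) x^i. -/
open Finset Polynomial

set_option linter.unusedSectionVars false

section Aux
variable {V₁ V₂ : Type*} [Fintype V₁] [Fintype V₂] (G₁ : SimpleGraph V₁) (G₂ : SimpleGraph V₂)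

lemma univ_ocd {V : Type*} [Fintype V] (G : SimpleGraph V) : IsOcdSet G Finset.univ :=
  ⟨fun v hv => absurd (Finset.mem_univ v) hv, Or.inl rfl⟩

lemma reach_side {u v : V₁ ⊕ V₂} (h : (G₁ ⊕g G₂).Reachable u v) : u.isLeft = v.isLeft := by
  obtain ⟨w⟩ := h
  induction w with
  | nil => rfl
  | @cons a b c hab _ ih =>
    refine Eq.trans ?_ ih
    cases a <;> cases b <;> simp_all [SimpleGraph.sum_adj]

noncomputable def induceIsoLeft (s : Set V₁) :
    G₁.induce s ≃g (G₁ ⊕g G₂).induce (Sum.inl '' s) where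
  toEquiv := Equiv.Set.image Sum.inl s Sum.inl_injective
  map_rel_iff' := by
    intro a b
    simp [Equiv.Set.image, Equiv.Set.imageOfInjOn, SimpleGraph.sum_adj]

noncomputable def induceIsoRight (s : Set V₂) :
    G₂.induce s ≃g (G₁ ⊕g G₂).induce (Sum.inr '' s) where
  toEquiv := Equiv.Set.image Sum.inr s Sum.inr_injective
  map_rel_iff' := by
    intro a b
    simp [Equiv.Set.image, Equiv.Set.imageOfInjOn, SimpleGraph.sum_adj]

lemma iso_connected {V W : Type*} {G : SimpleGraph V} {H : SimpleGraph W} (e : G ≃g H) :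
    G.Connected ↔ H.Connected := by
  rw [SimpleGraph.connected_iff, SimpleGraph.connected_iff, e.preconnected_iff,
    e.toEquiv.nonempty_congr]

lemma compl_left (S₁ : Finset V₁) :
    ((↑(S₁.disjSum (univ : Finset V₂)) : Set (V₁ ⊕ V₂)))ᶜ = Sum.inl '' ((↑S₁ : Set V₁))ᶜ := by
  ext x; cases x <;> simp

lemma compl_right (S₂ : Finset V₂) :
    ((↑((univ : Finset V₁).disjSum S₂) : Set (V₁ ⊕ V₂)))ᶜ = Sum.inr '' ((↑S₂ : Set V₂))ᶜ := by
  ext x; cases x <;> simp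

lemma ocd_left (S₁ : Finset V₁) (h : IsOcdSet G₁ S₁) :
    IsOcdSet (G₁ ⊕g G₂) (S₁.disjSum univ) := by
  constructor
  · rintro (a | b) hv
    · rw [Finset.inl_mem_disjSum] at hv
      obtain ⟨u, hu, hadj⟩ := h.1 a hv
      exact ⟨Sum.inl u, Finset.inl_mem_disjSum.2 hu, hadj⟩
    · exact absurd (Finset.inr_mem_disjSum.2 (mem_univ b)) hv
  · rcases h.2 with h2 | h2
    · left; rw [h2, Finset.univ_disjSum_univ]
    · right
      rw [compl_left]
      exact ((iso_connected (induceIsoLeft G₁ G₂ _))).1 h2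

lemma ocd_right (S₂ : Finset V₂) (h : IsOcdSet G₂ S₂) :
    IsOcdSet (G₁ ⊕g G₂) (univ.disjSum S₂) := by
  constructor
  · rintro (a | b) hv
    · exact absurd (Finset.inl_mem_disjSum.2 (mem_univ a)) hv
    · rw [Finset.inr_mem_disjSum] at hv
      obtain ⟨u, hu, hadj⟩ := h.1 b hv
      exact ⟨Sum.inr u, Finset.inr_mem_disjSum.2 hu, hadj⟩
  · rcases h.2 with h2 | h2
    · left; rw [h2, Finset.univ_disjSum_univ]
    · right
      rw [compl_right]
      exact ((iso_connected (induceIsoRight G₁ G₂ _))).1 h2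

lemma ocd_sum_iff (S : Finset (V₁ ⊕ V₂)) :
    IsOcdSet (G₁ ⊕g G₂) S ↔
      (∃ S₁, IsOcdSet G₁ S₁ ∧ S = S₁.disjSum univ) ∨
      (∃ S₂, IsOcdSet G₂ S₂ ∧ S = univ.disjSum S₂) := by
  constructor
  · rintro ⟨hdom, hS | hS⟩
    · left
      exact ⟨univ, univ_ocd G₁, by rw [hS, Finset.univ_disjSum_univ]⟩
    · -- complement connected
      obtain ⟨x, hx⟩ := hS.nonempty
      have hreach : ∀ y : V₁ ⊕ V₂, y ∉ S → (G₁ ⊕g G₂).Reachable x y := by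
        intro y hy
        exact (hS.preconnected ⟨x, hx⟩ ⟨y, hy⟩).map (SimpleGraph.Embedding.induce _).toHom
      have hside : ∀ y : V₁ ⊕ V₂, y ∉ S → y.isLeft = x.isLeft := by
        intro y hy
        exact (reach_side G₁ G₂ (hreach y hy)).symm
      have hxS : x ∉ S := by simpa using hx
      match x, hxS, hside with
      | Sum.inl a, hxS, hside =>
        have hright : S.toRight = univ := by
          ext b
          simp only [Finset.mem_toRight, mem_univ, iff_true]
          by_contra hb
          simpa using hside (Sum.inr b) hb
        left
        refine ⟨S.toLeft, ⟨?_, ?_⟩, ?_⟩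
        · intro v hv
          have hv' : Sum.inl v ∉ S := by simpa [Finset.mem_toLeft] using hv
          obtain ⟨u, hu, hadj⟩ := hdom (Sum.inl v) hv'
          match u, hu, hadj with
          | Sum.inl u, hu, hadj =>
            exact ⟨u, Finset.mem_toLeft.2 hu, hadj⟩
        · right
          have hSeq : S = S.toLeft.disjSum univ := by
            conv_lhs => rw [← Finset.toLeft_disjSum_toRight (u := S)]
            rw [hright]
          have hc := hS
          rw [hSeq, compl_left] at hc
          exact (iso_connected (induceIsoLeft G₁ G₂ _)).2 hc
        · conv_lhs => rw [← Finset.toLeft_disjSum_toRight (u := S)]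
          rw [hright]
      | Sum.inr b, hxS, hside =>
        have hleft : S.toLeft = univ := by
          ext a
          simp only [Finset.mem_toLeft, mem_univ, iff_true]
          by_contra ha
          simpa using hside (Sum.inl a) ha
        right
        refine ⟨S.toRight, ⟨?_, ?_⟩, ?_⟩
        · intro v hv
          have hv' : Sum.inr v ∉ S := by simpa [Finset.mem_toRight] using hv
          obtain ⟨u, hu, hadj⟩ := hdom (Sum.inr v) hv'
          match u, hu, hadj with
          | Sum.inr u, hu, hadj =>
            exact ⟨u, Finset.mem_toRight.2 hu, hadj⟩
        · right
          have hSeq : S = univ.disjSum S.toRight := by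
            conv_lhs => rw [← Finset.toLeft_disjSum_toRight (u := S)]
            rw [hleft]
          have hc := hS
          rw [hSeq, compl_right] at hc
          exact (iso_connected (induceIsoRight G₁ G₂ _)).2 hc
        · conv_lhs => rw [← Finset.toLeft_disjSum_toRight (u := S)]
          rw [hleft]
  · rintro (⟨S₁, h, rfl⟩ | ⟨S₂, h, rfl⟩)
    · exact ocd_left G₁ G₂ S₁ h
    · exact ocd_right G₁ G₂ S₂ h

end Aux

lemma ocdPoly_eq {V : Type*} [Fintype V] (G : SimpleGraph V) [DecidablePred (IsOcdSet G)] :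
    ocdPoly G = ∑ S ∈ Finset.univ.filter (IsOcdSet G), (X : ℤ[X]) ^ S.card := by
  classical
  have key : ∀ i, (Polynomial.C (docNum G i : ℤ)) * X ^ i
      = ∑ S ∈ (Finset.univ.filter (IsOcdSet G)).filter (fun S => S.card = i),
          (X : ℤ[X]) ^ S.card := by
    intro i
    rw [Finset.filter_filter,
      Finset.sum_congr rfl (fun S hS => by rw [(Finset.mem_filter.1 hS).2.2]),
      Finset.sum_const]
    have hd : docNum G i = (Finset.univ.filter fun S => IsOcdSet G S ∧ S.card = i).card := by
      rw [docNum, Nat.card_eq_fintype_card, Fintype.card_subtype]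
    rw [hd, nsmul_eq_mul]
    simp
  rw [ocdPoly, Finset.sum_congr rfl (fun i _ => key i),
    Finset.sum_fiberwise_of_maps_to
      (fun S _ => Finset.mem_range.2 (Nat.lt_succ_of_le (Finset.card_le_univ S)))]


open Polynomial in
/-- for the disjoint union `G = G₁ ∪ G₂`,
`D_oc(G,x) = x^{n₂} D_oc(G₁,x) + x^{n₁} D_oc(G₂,x) − x^{n₁+n₂}`. -/
theorem stmt_11 {V₁ V₂ : Type*} [Fintype V₁] [Fintype V₂]
    (G₁ : SimpleGraph V₁) (G₂ : SimpleGraph V₂)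
    (h₁ : 1 ≤ Fintype.card V₁) (h₂ : 1 ≤ Fintype.card V₂) :
    ocdPoly (G₁ ⊕g G₂) =
      X ^ (Fintype.card V₂) * ocdPoly G₁ + X ^ (Fintype.card V₁) * ocdPoly G₂ -
        X ^ (Fintype.card V₁ + Fintype.card V₂) := by
  classical
  rw [ocdPoly_eq, ocdPoly_eq, ocdPoly_eq]
  set f₁ : Finset V₁ → Finset (V₁ ⊕ V₂) := fun S => S.disjSum Finset.univ with hf₁
  set f₂ : Finset V₂ → Finset (V₁ ⊕ V₂) := fun S => Finset.univ.disjSum S with hf₂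
  have hinj₁ : Function.Injective f₁ := fun a b h => by
    have := congrArg Finset.toLeft h
    simpa [hf₁] using this
  have hinj₂ : Function.Injective f₂ := fun a b h => by
    have := congrArg Finset.toRight h
    simpa [hf₂] using this
  have hA : Finset.univ.filter (IsOcdSet (G₁ ⊕g G₂)) =
      ((Finset.univ.filter (IsOcdSet G₁)).image f₁) ∪
        ((Finset.univ.filter (IsOcdSet G₂)).image f₂) := by
    ext S
    simp only [Finset.mem_filter, Finset.mem_univ, true_and, Finset.mem_union, Finset.mem_image]
    rw [ocd_sum_iff]
    constructor
    · rintro (⟨S₁, h, rfl⟩ | ⟨S₂, h, rfl⟩)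
      · exact Or.inl ⟨S₁, h, rfl⟩
      · exact Or.inr ⟨S₂, h, rfl⟩
    · rintro (⟨S₁, h, rfl⟩ | ⟨S₂, h, rfl⟩)
      · exact Or.inl ⟨S₁, h, rfl⟩
      · exact Or.inr ⟨S₂, h, rfl⟩
  have hI : ((Finset.univ.filter (IsOcdSet G₁)).image f₁) ∩
        ((Finset.univ.filter (IsOcdSet G₂)).image f₂) = {(Finset.univ : Finset (V₁ ⊕ V₂))} := by
    ext S
    simp only [Finset.mem_inter, Finset.mem_image, Finset.mem_filter, Finset.mem_univ, true_and,
      Finset.mem_singleton]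
    constructor
    · rintro ⟨⟨S₁, _, rfl⟩, ⟨S₂, _, hEq⟩⟩
      have hS₁ : S₁ = Finset.univ := by
        have := congrArg Finset.toLeft hEq
        simpa [hf₁, hf₂] using this.symm
      rw [hf₁]
      simp only [hS₁]
      exact Finset.univ_disjSum_univ
    · rintro rfl
      exact ⟨⟨Finset.univ, univ_ocd G₁, by simp [hf₁, Finset.univ_disjSum_univ]⟩,
        ⟨Finset.univ, univ_ocd G₂, by simp [hf₂, Finset.univ_disjSum_univ]⟩⟩
  rw [hA]
  have hsum : (∑ S ∈ ((Finset.univ.filter (IsOcdSet G₁)).image f₁) ∪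
        ((Finset.univ.filter (IsOcdSet G₂)).image f₂), (X : ℤ[X]) ^ S.card) +
      ∑ S ∈ ((Finset.univ.filter (IsOcdSet G₁)).image f₁) ∩
        ((Finset.univ.filter (IsOcdSet G₂)).image f₂), (X : ℤ[X]) ^ S.card =
      (∑ S ∈ (Finset.univ.filter (IsOcdSet G₁)).image f₁, (X : ℤ[X]) ^ S.card) +
      ∑ S ∈ (Finset.univ.filter (IsOcdSet G₂)).image f₂, (X : ℤ[X]) ^ S.card :=
    Finset.sum_union_inter
  rw [hI] at hsum
  have h1 : ∑ S ∈ (Finset.univ.filter (IsOcdSet G₁)).image f₁, (X : ℤ[X]) ^ S.card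
      = X ^ (Fintype.card V₂) * ∑ S ∈ Finset.univ.filter (IsOcdSet G₁), X ^ S.card := by
    rw [Finset.sum_image (fun a _ b _ h => hinj₁ h), Finset.mul_sum]
    refine Finset.sum_congr rfl fun S _ => ?_
    rw [hf₁]
    simp only [Finset.card_disjSum, Finset.card_univ]
    rw [pow_add, mul_comm]
  have h2 : ∑ S ∈ (Finset.univ.filter (IsOcdSet G₂)).image f₂, (X : ℤ[X]) ^ S.card
      = X ^ (Fintype.card V₁) * ∑ S ∈ Finset.univ.filter (IsOcdSet G₂), X ^ S.card := by
    rw [Finset.sum_image (fun a _ b _ h => hinj₂ h), Finset.mul_sum]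
    refine Finset.sum_congr rfl fun S _ => ?_
    rw [hf₂]
    simp only [Finset.card_disjSum, Finset.card_univ]
    rw [pow_add]
  have h3 : ∑ S ∈ ({(Finset.univ : Finset (V₁ ⊕ V₂))} : Finset (Finset (V₁ ⊕ V₂))),
      (X : ℤ[X]) ^ S.card = X ^ (Fintype.card V₁ + Fintype.card V₂) := by
    simp [Finset.card_univ, Fintype.card_sum]
  rw [eq_sub_of_add_eq hsum, h1, h2, h3]
end

section
/- Let G be the disjoint union of two finite simple graphs G_1 and G_2 on n_1 ≥ 1 and n_2 ≥ 1 vertices. A set S of vertices of G is an outer-connected dominating set of G if and only if either (S ∩ V(G_1)) is an ocd-set of G_1 and S ⊇ V(G_2), or (S ∩ V(G_2)) is an ocd-set of G_2 and S ⊇ V(G_1). -/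
section Aux

variable {V₁ V₂ : Type*} (G₁ : SimpleGraph V₁) (G₂ : SimpleGraph V₂) (S : Finset (V₁ ⊕ V₂))

lemma conn_left (h : ∀ w : V₂, Sum.inr w ∈ S) :
    ((G₁ ⊕g G₂).induce ((↑S : Set (V₁ ⊕ V₂))ᶜ)).Connected ↔
      (G₁.induce ((↑(S.preimage Sum.inl Sum.inl_injective.injOn) : Set V₁)ᶜ)).Connected := by
  have himg : Sum.inl '' ((↑(S.preimage Sum.inl Sum.inl_injective.injOn) : Set V₁)ᶜ)
      = (↑S : Set (V₁ ⊕ V₂))ᶜ := by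
    ext x
    cases x with
    | inl v => simp
    | inr w => simp [h w]
  let e : ↥((↑(S.preimage Sum.inl Sum.inl_injective.injOn) : Set V₁)ᶜ) ≃ ↥((↑S : Set (V₁ ⊕ V₂))ᶜ) :=
    (Equiv.Set.image Sum.inl _ Sum.inl_injective).trans (Equiv.setCongr himg)
  have iso : G₁.induce ((↑(S.preimage Sum.inl Sum.inl_injective.injOn) : Set V₁)ᶜ)
      ≃g (G₁ ⊕g G₂).induce ((↑S : Set (V₁ ⊕ V₂))ᶜ) := by
    refine ⟨e, ?_⟩
    intro a b
    simp [e, Equiv.Set.image, Equiv.Set.imageOfInjOn]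
  exact iso.connected_iff.symm

lemma conn_right (h : ∀ v : V₁, Sum.inl v ∈ S) :
    ((G₁ ⊕g G₂).induce ((↑S : Set (V₁ ⊕ V₂))ᶜ)).Connected ↔
      (G₂.induce ((↑(S.preimage Sum.inr Sum.inr_injective.injOn) : Set V₂)ᶜ)).Connected := by
  have himg : Sum.inr '' ((↑(S.preimage Sum.inr Sum.inr_injective.injOn) : Set V₂)ᶜ)
      = (↑S : Set (V₁ ⊕ V₂))ᶜ := by
    ext x
    cases x with
    | inl v => simp [h v]
    | inr w => simp
  let e : ↥((↑(S.preimage Sum.inr Sum.inr_injective.injOn) : Set V₂)ᶜ) ≃ ↥((↑S : Set (V₁ ⊕ V₂))ᶜ) :=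
    (Equiv.Set.image Sum.inr _ Sum.inr_injective).trans (Equiv.setCongr himg)
  have iso : G₂.induce ((↑(S.preimage Sum.inr Sum.inr_injective.injOn) : Set V₂)ᶜ)
      ≃g (G₁ ⊕g G₂).induce ((↑S : Set (V₁ ⊕ V₂))ᶜ) := by
    refine ⟨e, ?_⟩
    intro a b
    simp [e, Equiv.Set.image, Equiv.Set.imageOfInjOn]
  exact iso.connected_iff.symm

lemma reach_isLeft {a b : ((↑S : Set (V₁ ⊕ V₂))ᶜ : Set _)}
    (h : ((G₁ ⊕g G₂).induce ((↑S : Set (V₁ ⊕ V₂))ᶜ)).Reachable a b) :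
    (a : V₁ ⊕ V₂).isLeft = (b : V₁ ⊕ V₂).isLeft := by
  obtain ⟨w⟩ := h
  induction w with
  | nil => rfl
  | cons hadj _ ih =>
    refine Eq.trans ?_ ih
    rename_i x y _ _
    obtain ⟨x, hx⟩ := x
    obtain ⟨y, hy⟩ := y
    cases x <;> cases y <;> simp_all [SimpleGraph.comap_adj]

end Aux

/-- `S` is an ocd-set of the disjoint union `G₁ ∪ G₂` iff
`S ∩ V(G₁)` is an ocd-set of `G₁` and `S ⊇ V(G₂)`, or symmetrically. -/
theorem stmt_12 {V₁ V₂ : Type*} [Fintype V₁] [Fintype V₂]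
    (G₁ : SimpleGraph V₁) (G₂ : SimpleGraph V₂)
    (h₁ : 1 ≤ Fintype.card V₁) (h₂ : 1 ≤ Fintype.card V₂)
    (S : Finset (V₁ ⊕ V₂)) :
    IsOcdSet (G₁ ⊕g G₂) S ↔
      (IsOcdSet G₁ (S.preimage Sum.inl Sum.inl_injective.injOn) ∧ ∀ w : V₂, Sum.inr w ∈ S) ∨
      (IsOcdSet G₂ (S.preimage Sum.inr Sum.inr_injective.injOn) ∧ ∀ v : V₁, Sum.inl v ∈ S) := by
  constructor
  · rintro ⟨hdom, hconn⟩
    have dom₁ : (∀ w : V₂, Sum.inr w ∈ S) → IsDomSet G₁ (S.preimage Sum.inl Sum.inl_injective.injOn) := by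
      intro hall v hv
      rw [Finset.mem_preimage] at hv
      obtain ⟨u, hu, hadj⟩ := hdom _ hv
      cases u with
      | inl u => exact ⟨u, Finset.mem_preimage.mpr hu, by simpa using hadj⟩
      | inr u => simp at hadj
    have dom₂ : (∀ v : V₁, Sum.inl v ∈ S) → IsDomSet G₂ (S.preimage Sum.inr Sum.inr_injective.injOn) := by
      intro hall v hv
      rw [Finset.mem_preimage] at hv
      obtain ⟨u, hu, hadj⟩ := hdom _ hv
      cases u with
      | inl u => simp at hadj
      | inr u => exact ⟨u, Finset.mem_preimage.mpr hu, by simpa using hadj⟩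
    rcases hconn with huniv | hconn
    · subst huniv
      left
      refine ⟨⟨dom₁ (fun w => Finset.mem_univ _), Or.inl ?_⟩, fun w => Finset.mem_univ _⟩
      ext v; simp
    · obtain ⟨x, hx⟩ := hconn.nonempty
      cases hxval : x with
      | inl v =>
        have hall : ∀ w : V₂, Sum.inr w ∈ S := by
          intro w
          by_contra hw
          have hw' : (Sum.inr w : V₁ ⊕ V₂) ∈ (↑S : Set (V₁ ⊕ V₂))ᶜ := by simpa using hw
          have := reach_isLeft G₁ G₂ S (hconn.preconnected ⟨x, hx⟩ ⟨Sum.inr w, hw'⟩)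
          simp [hxval] at this
        exact Or.inl ⟨⟨dom₁ hall, Or.inr ((conn_left G₁ G₂ S hall).mp hconn)⟩, hall⟩
      | inr w =>
        have hall : ∀ v : V₁, Sum.inl v ∈ S := by
          intro v
          by_contra hv
          have hv' : (Sum.inl v : V₁ ⊕ V₂) ∈ (↑S : Set (V₁ ⊕ V₂))ᶜ := by simpa using hv
          have := reach_isLeft G₁ G₂ S (hconn.preconnected ⟨x, hx⟩ ⟨Sum.inl v, hv'⟩)
          simp [hxval] at this
        exact Or.inr ⟨⟨dom₂ hall, Or.inr ((conn_right G₁ G₂ S hall).mp hconn)⟩, hall⟩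
  · rintro (⟨⟨hdom, hc⟩, hall⟩ | ⟨⟨hdom, hc⟩, hall⟩)
    · refine ⟨?_, ?_⟩
      · intro v hv
        cases v with
        | inl v =>
          obtain ⟨u, hu, hadj⟩ := hdom v (by simpa [Finset.mem_preimage] using hv)
          exact ⟨Sum.inl u, Finset.mem_preimage.mp hu, by simpa using hadj⟩
        | inr w => exact absurd (hall w) hv
      · rcases hc with huniv | hc
        · left
          ext x
          cases x with
          | inl v =>
            have : v ∈ S.preimage Sum.inl Sum.inl_injective.injOn := huniv ▸ Finset.mem_univ v
            simpa [Finset.mem_preimage] using this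
          | inr w => simp [hall w]
        · exact Or.inr ((conn_left G₁ G₂ S hall).mpr hc)
    · refine ⟨?_, ?_⟩
      · intro v hv
        cases v with
        | inl v => exact absurd (hall v) hv
        | inr w =>
          obtain ⟨u, hu, hadj⟩ := hdom w (by simpa [Finset.mem_preimage] using hv)
          exact ⟨Sum.inr u, Finset.mem_preimage.mp hu, by simpa using hadj⟩
      · rcases hc with huniv | hc
        · left
          ext x
          cases x with
          | inl v => simp [hall v]
          | inr w =>
            have : w ∈ S.preimage Sum.inr Sum.inr_injective.injOn := huniv ▸ Finset.mem_univ w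
            simpa [Finset.mem_preimage] using this
        · exact Or.inr ((conn_right G₁ G₂ S hall).mpr hc)
end
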